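/- arXiv:2211.00169 — 7 statements merged into one kernel-verified Lean document; each statement's English description precedes it below -/
import Mathlib

section
/- Let M = I − F*, let w ∈ ℝ^{nm} be the entrywise-positive left null vector of B M + L* (i.e. w^T (B M + L*) = 0) normalized so that max_k w_k = 1, let W = diag(w), let s = min over all pairs (i,α) of (δ^α_i − β^α_i), and let λ₂ be the second smallest eigenvalue of the symmetric matrix (1/2)(W (B M + L*) + (B M + L*)^T W). Assume B M + L* is irreducible and that not all differences δ^α_i − β^α_i equal s (so Σ_{(α,i)} w_{(α,i)} (δ^α_i − β^α_i − s) > 0). If λ₂ / ((1 + √(1 + λ₂ / Σ_{(α,i)} w_{(α,i)} (δ^α_i − β^α_i − s)))² · nm + 1) + s ≥ 0, then the spectral abscissa satisfies μ(B F* − D − L*) ≤ 0. -/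
open Matrix BigOperators Finset

/-- Spectral abscissa of a real square matrix: the maximum of the real parts of its
(complex) eigenvalues. -/
noncomputable def specAbscissa {k : Type*} [Fintype k] [DecidableEq k]
    (M : Matrix k k ℝ) : ℝ :=
  sSup {r : ℝ | ∃ z ∈ spectrum ℂ (M.map Complex.ofReal), z.re = r}

/-- Diagonal `nm × nm` matrix (indexed by pairs `(α, i)`) built from rates `c^α_i`. -/
noncomputable def pairDiag {n m : ℕ} (c : Fin m → Fin n → ℝ) :
    Matrix (Fin m × Fin n) (Fin m × Fin n) ℝ :=
  Matrix.diagonal fun q => c q.1 q.2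

/-- The equilibrium dispersal Laplacian `L*`: block-diagonal, whose `α`-th `n × n` block
has `(i,i)` entry `ν^α_i = ∑_{j ≠ i} q^α_{ij}` and `(i,j)` entry `-q^α_{ji} π^α_j / π^α_i`
for `j ≠ i`. -/
noncomputable def Lstar {n m : ℕ} (Q : Fin m → Matrix (Fin n) (Fin n) ℝ)
    (piv : Fin m → Fin n → ℝ) : Matrix (Fin m × Fin n) (Fin m × Fin n) ℝ :=
  Matrix.of fun q q' =>
    if q.1 = q'.1 then
      (if q.2 = q'.2 then ∑ j ∈ Finset.univ \ {q.2}, Q q.1 q.2 j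
       else -(Q q.1 q'.2 q.2 * piv q.1 q'.2 / piv q.1 q.2))
    else 0

/-- The equilibrium population-fraction matrix `F*`: the `(α,σ)` block is the diagonal
matrix with entries `f^{*σ}_i = N^σ π^σ_i / ∑_τ N^τ π^τ_i` (the same row of blocks
repeated for every `α`). -/
noncomputable def Fstar {n m : ℕ} (N : Fin m → ℝ) (piv : Fin m → Fin n → ℝ) :
    Matrix (Fin m × Fin n) (Fin m × Fin n) ℝ :=
  Matrix.of fun q q' =>
    if q.2 = q'.2 then N q'.1 * piv q'.1 q.2 / ∑ τ, N τ * piv τ q.2 else 0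

/-- The Laplacian-type matrix `K = B M + L*` with `M = I − F*`. -/
noncomputable def Kmat {n m : ℕ} (Q : Fin m → Matrix (Fin n) (Fin n) ℝ)
    (piv : Fin m → Fin n → ℝ) (N : Fin m → ℝ) (β : Fin m → Fin n → ℝ) :
    Matrix (Fin m × Fin n) (Fin m × Fin n) ℝ :=
  pairDiag β * (1 - Fstar N piv) + Lstar Q piv

/-- The symmetrized weighted matrix `S = (1/2)(W K + Kᵀ W)` with `W = diag(w)`. -/
noncomputable def Smat {n m : ℕ} (Q : Fin m → Matrix (Fin n) (Fin n) ℝ)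
    (piv : Fin m → Fin n → ℝ) (N : Fin m → ℝ) (β : Fin m → Fin n → ℝ)
    (w : Fin m × Fin n → ℝ) : Matrix (Fin m × Fin n) (Fin m × Fin n) ℝ :=
  ((1 : ℝ) / 2) • (Matrix.diagonal w * Kmat Q piv N β
    + (Kmat Q piv N β)ᵀ * Matrix.diagonal w)


section Helpers

variable {ι : Type*} [Fintype ι] [DecidableEq ι]

/-- Coefficient of `x` in the orthonormal eigenbasis of a real symmetric matrix. -/
noncomputable def sCoeff {A : Matrix ι ι ℝ} (hA : A.IsHermitian) (x : ι → ℝ) (i : ι) : ℝ :=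
  ∑ j, hA.eigenvectorBasis i j * x j

lemma sCoeff_orth {A : Matrix ι ι ℝ} (hA : A.IsHermitian) (i i' : ι) :
    ∑ j, hA.eigenvectorBasis i j * hA.eigenvectorBasis i' j = if i = i' then 1 else 0 := by
  have h := hA.eigenvectorBasis.orthonormal
  rw [orthonormal_iff_ite] at h
  have := h i i'
  simpa [PiLp.inner_apply, RCLike.inner_apply, mul_comm] using this

lemma sCoeff_expand {A : Matrix ι ι ℝ} (hA : A.IsHermitian) (x : ι → ℝ) (j : ι) :
    x j = ∑ i, sCoeff hA x i * hA.eigenvectorBasis i j := by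
  classical
  set b := hA.eigenvectorBasis with hb
  set x' : EuclideanSpace ℝ ι := (WithLp.equiv 2 (ι → ℝ)).symm x
  have h := b.sum_repr x'
  have h4 : (∑ i, b.repr x' i • b i) j = ∑ i, (b.repr x' i • b i) j :=
    by rw [WithLp.ofLp_sum]; exact Finset.sum_apply j Finset.univ _
  have h2 : ∑ i, b.repr x' i * b i j = x j := by
    have h3 := congrArg (fun v : EuclideanSpace ℝ ι => v j) h
    simp only at h3
    rw [h4] at h3
    exact h3
  rw [← h2]
  apply Finset.sum_congr rfl
  intro i _
  congr 1
  rw [OrthonormalBasis.repr_apply_apply]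
  simp only [PiLp.inner_apply, RCLike.inner_apply, conj_trivial, sCoeff]
  exact Finset.sum_congr rfl fun _ _ => mul_comm _ _

lemma sCoeff_mulVec {A : Matrix ι ι ℝ} (hA : A.IsHermitian) (x : ι → ℝ) (i : ι) :
    sCoeff hA (A *ᵥ x) i = hA.eigenvalues i * sCoeff hA x i := by
  have hbv := hA.mulVec_eigenvectorBasis i
  have hsym : ∀ p q, A p q = A q p := by
    intro p q
    have := congrFun (congrFun hA q) p
    simpa [Matrix.conjTranspose_apply] using this
  calc sCoeff hA (A *ᵥ x) i = ∑ j, hA.eigenvectorBasis i j * ∑ k, A j k * x k := rfl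
    _ = ∑ k, (∑ j, A k j * hA.eigenvectorBasis i j) * x k := by
        simp only [Finset.mul_sum, Finset.sum_mul]
        rw [Finset.sum_comm]
        apply Finset.sum_congr rfl; intro k _
        apply Finset.sum_congr rfl; intro j _
        rw [hsym j k]; ring
    _ = ∑ k, (hA.eigenvalues i * hA.eigenvectorBasis i k) * x k := by
        apply Finset.sum_congr rfl; intro k _
        congr 1
        have := congrFun hbv k
        simpa [Matrix.mulVec, dotProduct] using this
    _ = hA.eigenvalues i * sCoeff hA x i := by
        rw [sCoeff, Finset.mul_sum]; apply Finset.sum_congr rfl; intro k _; ring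

lemma quad_eq_sum {A : Matrix ι ι ℝ} (hA : A.IsHermitian) (x : ι → ℝ) :
    x ⬝ᵥ A *ᵥ x = ∑ i, hA.eigenvalues i * sCoeff hA x i ^ 2 := by
  calc x ⬝ᵥ A *ᵥ x = ∑ j, x j * (A *ᵥ x) j := rfl
    _ = ∑ j, (∑ i, sCoeff hA x i * hA.eigenvectorBasis i j) * (A *ᵥ x) j := by
        apply Finset.sum_congr rfl; intro j _; rw [← sCoeff_expand]
    _ = ∑ i, sCoeff hA x i * ∑ j, hA.eigenvectorBasis i j * (A *ᵥ x) j := by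
        simp only [Finset.mul_sum, Finset.sum_mul]
        rw [Finset.sum_comm]
        apply Finset.sum_congr rfl; intro i _
        apply Finset.sum_congr rfl; intro j _; ring
    _ = ∑ i, hA.eigenvalues i * sCoeff hA x i ^ 2 := by
        apply Finset.sum_congr rfl; intro i _
        have : ∑ j, hA.eigenvectorBasis i j * (A *ᵥ x) j = sCoeff hA (A *ᵥ x) i := rfl
        rw [this, sCoeff_mulVec]; ring

lemma normsq_eq_sum {A : Matrix ι ι ℝ} (hA : A.IsHermitian) (x : ι → ℝ) :
    ∑ j, x j ^ 2 = ∑ i, sCoeff hA x i ^ 2 := by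
  calc ∑ j, x j ^ 2 = ∑ j, x j * x j := by apply Finset.sum_congr rfl; intros; ring
    _ = ∑ j, (∑ i, sCoeff hA x i * hA.eigenvectorBasis i j) *
          (∑ i, sCoeff hA x i * hA.eigenvectorBasis i j) := by
        apply Finset.sum_congr rfl; intro j _; rw [← sCoeff_expand]
    _ = ∑ i, ∑ i', sCoeff hA x i * sCoeff hA x i' *
          ∑ j, hA.eigenvectorBasis i j * hA.eigenvectorBasis i' j := by
        simp only [Finset.sum_mul, Finset.mul_sum]
        rw [Finset.sum_comm]
        apply Finset.sum_congr rfl; intro i _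
        rw [Finset.sum_comm]
        apply Finset.sum_congr rfl; intro i' _
        apply Finset.sum_congr rfl; intro j _; ring
    _ = ∑ i, sCoeff hA x i ^ 2 := by
        apply Finset.sum_congr rfl; intro i _
        rw [Finset.sum_eq_single i]
        · rw [sCoeff_orth]; simp; ring
        · intro i' _ hne; rw [sCoeff_orth]; simp [Ne.symm hne]
        · intro h; exact absurd (Finset.mem_univ i) h

/-- Spectral-gap bound. -/
lemma quad_ge_gap [Nonempty ι] {A : Matrix ι ι ℝ} (hA : A.IsHermitian)
    (q₀ : ι) (lam2 : ℝ) (hlam2pos : 0 < lam2)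
    (hlow : ∀ i, i ≠ q₀ → lam2 ≤ hA.eigenvalues i)
    (hone : A *ᵥ (fun _ => (1 : ℝ)) = 0)
    (x : ι → ℝ) (hx : ∑ j, x j = 0) :
    lam2 * ∑ j, x j ^ 2 ≤ x ⬝ᵥ A *ᵥ x := by
  classical
  have hzero : ∀ i, hA.eigenvalues i * sCoeff hA (fun _ => (1:ℝ)) i = 0 := by
    intro i
    have h := sCoeff_mulVec hA (fun _ => (1:ℝ)) i
    rw [hone] at h
    have h0 : sCoeff hA (0 : ι → ℝ) i = 0 := by simp [sCoeff]
    rw [h0] at h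
    exact h.symm
  have hc1zero : ∀ i, i ≠ q₀ → sCoeff hA (fun _ => (1:ℝ)) i = 0 := by
    intro i hi
    have h1 := hzero i
    have h2 := hlow i hi
    rcases mul_eq_zero.1 h1 with h | h
    · exact absurd h (by nlinarith)
    · exact h
  have hone_expand : ∀ j, (1 : ℝ) = sCoeff hA (fun _ => (1:ℝ)) q₀ * hA.eigenvectorBasis q₀ j := by
    intro j
    have := sCoeff_expand hA (fun _ => (1:ℝ)) j
    rw [Finset.sum_eq_single q₀] at this
    · exact this
    · intro i _ hi; rw [hc1zero i hi]; ring
    · intro h; exact absurd (Finset.mem_univ q₀) h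
  have hc1q0 : sCoeff hA (fun _ => (1:ℝ)) q₀ ≠ 0 := by
    intro h
    have := hone_expand (Classical.arbitrary ι)
    rw [h] at this; simp at this
  have hcx : sCoeff hA x q₀ = 0 := by
    have : sCoeff hA (fun _ => (1:ℝ)) q₀ * sCoeff hA x q₀ = 0 := by
      have hrfl : sCoeff hA x q₀ = ∑ j, hA.eigenvectorBasis q₀ j * x j := rfl
      rw [hrfl, Finset.mul_sum]
      calc ∑ j, sCoeff hA (fun _ => (1:ℝ)) q₀ * (hA.eigenvectorBasis q₀ j * x j)
          = ∑ j, x j := by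
            apply Finset.sum_congr rfl; intro j _
            rw [← mul_assoc, ← hone_expand j]; ring
        _ = 0 := hx
    rcases mul_eq_zero.1 this with h | h
    · exact absurd h hc1q0
    · exact h
  rw [quad_eq_sum hA x, normsq_eq_sum hA x]
  rw [Finset.mul_sum]
  apply Finset.sum_le_sum
  intro i _
  by_cases hi : i = q₀
  · subst hi; rw [hcx]; simp
  · have := hlow i hi
    nlinarith [sq_nonneg (sCoeff hA x i)]

/-- A symmetric matrix with zero row sums and nonpositive off-diagonal entries is PSD. -/
lemma quad_nonneg_laplacian (A : Matrix ι ι ℝ)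
    (hsym : ∀ p q, A p q = A q p)
    (hrow : ∀ p, ∑ q, A p q = 0)
    (hoff : ∀ p q, p ≠ q → A p q ≤ 0) (x : ι → ℝ) :
    0 ≤ x ⬝ᵥ A *ᵥ x := by
  classical
  have hcol : ∀ q, ∑ p, A p q = 0 := by
    intro q
    rw [← hrow q]
    exact Finset.sum_congr rfl fun p _ => hsym p q
  have key : ∑ p, ∑ q, A p q * (x p - x q) ^ 2 = -2 * (x ⬝ᵥ A *ᵥ x) := by
    have expand : ∀ p q, A p q * (x p - x q) ^ 2
        = A p q * x p ^ 2 + A p q * x q ^ 2 - 2 * (x p * (A p q * x q)) := by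
      intro p q; ring
    simp only [expand, Finset.sum_sub_distrib, Finset.sum_add_distrib]
    have h1 : ∑ p, ∑ q, A p q * x p ^ 2 = 0 := by
      apply Finset.sum_eq_zero; intro p _
      rw [← Finset.sum_mul, hrow p]; ring
    have h2 : ∑ p, ∑ q, A p q * x q ^ 2 = 0 := by
      rw [Finset.sum_comm]
      apply Finset.sum_eq_zero; intro q _
      rw [← Finset.sum_mul, hcol q]; ring
    have h3 : ∑ p, ∑ q, 2 * (x p * (A p q * x q)) = 2 * (x ⬝ᵥ A *ᵥ x) := by
      simp only [dotProduct, Matrix.mulVec, Finset.mul_sum]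
    rw [h1, h2, h3]; ring
  have hnp : ∑ p, ∑ q, A p q * (x p - x q) ^ 2 ≤ 0 := by
    apply Finset.sum_nonpos; intro p _
    apply Finset.sum_nonpos; intro q _
    by_cases hpq : p = q
    · subst hpq; simp
    · exact mul_nonpos_of_nonpos_of_nonneg (hoff p q hpq) (sq_nonneg _)
  rw [key] at hnp
  linarith

/-- Shift invariance of the quadratic form of a doubly-balanced matrix. -/
lemma quad_shift (A : Matrix ι ι ℝ)
    (hrow : ∀ p, ∑ q, A p q = 0) (hcol : ∀ q, ∑ p, A p q = 0)
    (y : ι → ℝ) (c : ℝ) :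
    (fun q => y q + c) ⬝ᵥ A *ᵥ (fun q => y q + c) = y ⬝ᵥ A *ᵥ y := by
  classical
  simp only [dotProduct, Matrix.mulVec, Finset.mul_sum]
  have expand : ∀ p q, (y p + c) * (A p q * (y q + c))
      = y p * (A p q * y q) + (c * (A p q * y p) + (c * (A p q * y q) + c * c * A p q)) := by
    intro p q; ring
  simp only [expand, Finset.sum_add_distrib]
  have h1 : ∑ p, ∑ q, c * (A p q * y p) = 0 := by
    apply Finset.sum_eq_zero; intro p _
    have : ∑ q, c * (A p q * y p) = c * y p * ∑ q, A p q := by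
      rw [Finset.mul_sum]; apply Finset.sum_congr rfl; intros; ring
    rw [this, hrow p]; ring
  have h2 : ∑ p, ∑ q, c * (A p q * y q) = 0 := by
    rw [Finset.sum_comm]
    apply Finset.sum_eq_zero; intro q _
    have : ∑ p, c * (A p q * y q) = c * y q * ∑ p, A p q := by
      rw [Finset.mul_sum]; apply Finset.sum_congr rfl; intros; ring
    rw [this, hcol q]; ring
  have h3 : ∑ p, ∑ q, c * c * A p q = 0 := by
    apply Finset.sum_eq_zero; intro p _
    rw [← Finset.mul_sum, hrow p]; ring
  rw [h1, h2, h3]; ring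

/-- The core scalar inequality. -/
lemma scalar_key (R lam2 c nm a u : ℝ) (hR : 0 < R) (hc : 0 < c) (hnm : 2 ≤ nm)
    (ha : 0 ≤ a) (hu : 0 ≤ u)
    (hcd : c * ((1 + Real.sqrt (1 + lam2 / R)) ^ 2 * nm + 1) ≤ lam2) :
    c * (nm * a ^ 2 + u ^ 2) ≤ lam2 * u ^ 2 + R * (max 0 (a - u)) ^ 2 := by
  set σ := Real.sqrt (1 + lam2 / R) with hσdef
  have hσ0 : 0 ≤ σ := Real.sqrt_nonneg _
  have hnm0 : (0:ℝ) ≤ nm := by linarith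
  have hlam2 : 0 < lam2 := by
    nlinarith [mul_nonneg (mul_nonneg hc.le (sq_nonneg (1 + σ))) hnm0]
  have hσsq : σ ^ 2 = 1 + lam2 / R := Real.sq_sqrt (by positivity)
  have hRσ : R * σ ^ 2 = R + lam2 := by
    rw [hσsq]; field_simp
  have hσ1 : 1 ≤ σ := by
    have h := Real.sqrt_le_sqrt (show (1:ℝ) ≤ 1 + lam2 / R by
      have := div_pos hlam2 hR; linarith)
    rwa [Real.sqrt_one] at h
  have hclam : c ≤ lam2 := by
    nlinarith [mul_nonneg (mul_nonneg hc.le (sq_nonneg (1 + σ))) hnm0]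
  by_cases hau : a ≤ u
  · have ha2 : a ^ 2 ≤ u ^ 2 := by nlinarith
    have hmax : 0 ≤ R * (max 0 (a - u)) ^ 2 := by positivity
    have h5 : c * (nm + 1) ≤ lam2 := by
      nlinarith [mul_nonneg (mul_nonneg hc.le
        (by nlinarith : (0:ℝ) ≤ (1 + σ) ^ 2 - 1)) hnm0]
    nlinarith [mul_nonneg (sub_nonneg.2 h5) (sq_nonneg u),
      mul_nonneg (mul_nonneg hc.le hnm0) (sub_nonneg.2 ha2)]
  · push_neg at hau
    have hmaxeq : max 0 (a - u) = a - u := max_eq_right (by linarith)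
    rw [hmaxeq]
    have h1 : 0 ≤ R * (lam2 - c * ((1 + σ) ^ 2 * nm + 1)) :=
      mul_nonneg hR.le (by linarith)
    have h2 : c * nm * (R * σ ^ 2) = c * nm * (R + lam2) := by rw [hRσ]
    have key : R ^ 2 ≤ (lam2 - c + R) * (R - c * nm) := by
      nlinarith [mul_nonneg (mul_nonneg (mul_nonneg hc.le hR.le) hσ0) hnm0,
        mul_nonneg (mul_nonneg hc.le hc.le) hnm0]
    have hA : 0 < lam2 - c + R := by linarith
    nlinarith [sq_nonneg ((lam2 - c + R) * u - R * a),
      mul_nonneg (sub_nonneg.2 key) (sq_nonneg a), hA]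

/-- Eigenvector extraction from the spectrum of a complex matrix. -/
lemma exists_eigvec (M : Matrix ι ι ℂ) (z : ℂ)
    (hz : z ∈ spectrum ℂ M) : ∃ v : ι → ℂ, v ≠ 0 ∧ M *ᵥ v = z • v := by
  rw [← AlgEquiv.spectrum_eq (Matrix.toLinAlgEquiv' (R := ℂ) (n := ι)),
    ← Module.End.hasEigenvalue_iff_mem_spectrum] at hz
  obtain ⟨v, hv⟩ := hz.exists_hasEigenvector
  refine ⟨v, hv.2, ?_⟩
  have := hv.apply_eq_smul
  rwa [Matrix.toLinAlgEquiv'_apply] at this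

end Helpers
/-- Let `M = I − F*`, let `w` be the entrywise-positive left null vector
of `B M + L*` normalized so that `max_k w_k = 1`, let `W = diag(w)`,
let `s = min_{(i,α)} (δ^α_i − β^α_i)`, and let `λ₂` be the second smallest eigenvalue of
`(1/2)(W (B M + L*) + (B M + L*)ᵀ W)`. Assume `B M + L*` is irreducible and not all
differences `δ^α_i − β^α_i` equal `s` (so `∑ w (δ − β − s) > 0`). If
`λ₂ / ((1 + √(1 + λ₂ / ∑ w (δ − β − s)))² nm + 1) + s ≥ 0`, then
`μ(B F* − D − L*) ≤ 0`. -/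
theorem specAbscissa_nonpos_of_lambda2_condition
    {n m : ℕ} (hn : 2 ≤ n) (hm : 1 ≤ m)
    (Q : Fin m → Matrix (Fin n) (Fin n) ℝ)
    (hQoff : ∀ (α : Fin m) (i j : Fin n), i ≠ j → 0 ≤ Q α i j)
    (hQdiag : ∀ (α : Fin m) (i : Fin n), Q α i i = -∑ j ∈ Finset.univ \ {i}, Q α i j)
    (hQirr : ∀ (α : Fin m) (i j : Fin n),
      Relation.ReflTransGen (fun a b => 0 < Q α a b) i j)
    (piv : Fin m → Fin n → ℝ) (hpivpos : ∀ α i, 0 < piv α i)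
    (hpiveig : ∀ (α : Fin m) (i : Fin n), ∑ j, Q α j i * piv α j = 0)
    (hpivsum : ∀ α, ∑ i, piv α i = 1)
    (N : Fin m → ℝ) (hN : ∀ α, 0 < N α)
    (β δ : Fin m → Fin n → ℝ)
    (hβ : ∀ α i, 0 < β α i) (hδ : ∀ α i, 0 ≤ δ α i)
    (hδpos : ∀ α, ∃ k, 0 < δ α k)
    -- `B M + L*` is irreducible
    (hKirr : ∀ q q' : Fin m × Fin n,
      Relation.ReflTransGen (fun a b => a ≠ b ∧ Kmat Q piv N β a b ≠ 0) q q')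
    -- the positive left null vector of `B M + L*`, normalized so `max_k w_k = 1`
    (w : Fin m × Fin n → ℝ) (hwpos : ∀ q, 0 < w q)
    (hwnull : Matrix.vecMul w (Kmat Q piv N β) = 0)
    (hwle : ∀ q, w q ≤ 1) (hwmax : ∃ q, w q = 1)
    -- `s` is the minimum of `δ^α_i − β^α_i` over all pairs `(i, α)`
    (s : ℝ) (hs_le : ∀ (i : Fin n) (α : Fin m), s ≤ δ α i - β α i)
    (hs_mem : ∃ (i : Fin n) (α : Fin m), δ α i - β α i = s)
    -- not all differences equal `s`, so the weighted sum is positive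
    (hne : ∃ (i : Fin n) (α : Fin m), δ α i - β α i ≠ s)
    (hsum_pos : 0 < ∑ q : Fin m × Fin n, w q * (δ q.1 q.2 - β q.1 q.2 - s))
    -- `λ₂`: the second smallest eigenvalue (with multiplicity) of the symmetric matrix `S`
    (hS : (Smat Q piv N β w).IsHermitian)
    (q₀ : Fin m × Fin n) (hq₀ : ∀ q, hS.eigenvalues q₀ ≤ hS.eigenvalues q)
    (lam2 : ℝ)
    (hlam2 : IsLeast {r : ℝ | ∃ q ≠ q₀, hS.eigenvalues q = r} lam2)
    -- the sufficient condition
    (hcond : 0 ≤ lam2 / ((1 + Real.sqrt (1 + lam2 /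
        (∑ q : Fin m × Fin n, w q * (δ q.1 q.2 - β q.1 q.2 - s)))) ^ 2 * (n * m : ℝ) + 1)
        + s) :
    specAbscissa (pairDiag β * Fstar N piv - pairDiag δ - Lstar Q piv) ≤ 0 := by
  classical
  have hm0 : 0 < m := hm
  have hn0 : 0 < n := by omega
  haveI : Nonempty (Fin m) := ⟨⟨0, hm0⟩⟩
  haveI : Nonempty (Fin n) := ⟨⟨0, hn0⟩⟩
  -- structural facts
  have hden : ∀ i : Fin n, 0 < ∑ τ, N τ * piv τ i := fun i =>
    Finset.sum_pos (fun τ _ => mul_pos (hN τ) (hpivpos τ i)) Finset.univ_nonempty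
  have hF0 : ∀ q q' : Fin m × Fin n, 0 ≤ Fstar N piv q q' := by
    intro q q'
    show (0:ℝ) ≤ if q.2 = q'.2 then N q'.1 * piv q'.1 q.2 / ∑ τ, N τ * piv τ q.2 else 0
    split
    · exact div_nonneg (mul_nonneg (hN q'.1).le (hpivpos q'.1 q.2).le) (hden q.2).le
    · exact le_refl 0
  have hFrow : ∀ q : Fin m × Fin n, ∑ q', Fstar N piv q q' = 1 := by
    intro q
    rw [Fintype.sum_prod_type]
    have h1 : ∀ α' : Fin m, ∑ j : Fin n, Fstar N piv q (α', j)
        = N α' * piv α' q.2 / ∑ τ, N τ * piv τ q.2 := by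
      intro α'
      have : ∀ j : Fin n, Fstar N piv q (α', j)
          = if q.2 = j then N α' * piv α' q.2 / ∑ τ, N τ * piv τ q.2 else 0 := fun j => rfl
      simp only [this]
      rw [Finset.sum_ite_eq]
      simp
    simp only [h1]
    rw [← Finset.sum_div]
    exact div_self (hden q.2).ne'
  have hLrow : ∀ q : Fin m × Fin n, ∑ q', Lstar Q piv q q' = 0 := by
    rintro ⟨α, i⟩
    rw [Fintype.sum_prod_type]
    have h1 : ∀ α' : Fin m, ∑ j : Fin n, Lstar Q piv (α, i) (α', j)
        = if α = α' then ∑ j : Fin n, (if i = j then ∑ k ∈ Finset.univ \ {i}, Q α i k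
            else -(Q α j i * piv α j / piv α i)) else 0 := by
      intro α'
      by_cases h : α = α'
      · subst h
        simp only [if_pos rfl]
        apply Finset.sum_congr rfl
        intro j _
        show (if α = α then (if i = j then _ else _) else 0) = _
        rw [if_pos rfl]
      · simp only [if_neg h]
        apply Finset.sum_eq_zero
        intro j _
        show (if α = α' then _ else (0:ℝ)) = 0
        rw [if_neg h]
    simp only [h1]
    rw [Finset.sum_ite_eq]
    simp only [Finset.mem_univ, if_true]
    have hsplit : ∑ j : Fin n, (if i = j then ∑ k ∈ Finset.univ \ {i}, Q α i k
        else -(Q α j i * piv α j / piv α i))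
        = (∑ j ∈ Finset.univ \ {i}, -(Q α j i * piv α j / piv α i))
          + ∑ k ∈ Finset.univ \ {i}, Q α i k := by
      rw [Finset.sum_eq_sum_sdiff_singleton_add (Finset.mem_univ i)]
      rw [if_pos rfl]
      congr 1
      apply Finset.sum_congr rfl
      intro j hj
      rw [Finset.mem_sdiff, Finset.mem_singleton] at hj
      rw [if_neg (show ¬ i = j from fun h => hj.2 h.symm)]
    rw [hsplit]
    have heig : ∑ j ∈ Finset.univ \ {i}, Q α j i * piv α j
        = (∑ k ∈ Finset.univ \ {i}, Q α i k) * piv α i := by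
      have h0 := hpiveig α i
      rw [Finset.sum_eq_sum_sdiff_singleton_add (Finset.mem_univ i)] at h0
      rw [hQdiag α i] at h0
      linarith
    have : ∑ j ∈ Finset.univ \ {i}, -(Q α j i * piv α j / piv α i)
        = -((∑ j ∈ Finset.univ \ {i}, Q α j i * piv α j) / piv α i) := by
      rw [Finset.sum_neg_distrib, ← Finset.sum_div]
    rw [this, heig, mul_div_assoc, div_self (hpivpos α i).ne', mul_one]
    ring
  have hLoff : ∀ q q' : Fin m × Fin n, q ≠ q' → Lstar Q piv q q' ≤ 0 := by
    intro q q' hne'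
    show (if q.1 = q'.1 then (if q.2 = q'.2 then _ else
      -(Q q.1 q'.2 q.2 * piv q.1 q'.2 / piv q.1 q.2)) else 0) ≤ (0:ℝ)
    split_ifs with h1 h2
    · exact absurd (Prod.ext h1 h2) hne'
    · have hne2 : q'.2 ≠ q.2 := fun h => h2 h.symm
      have := hQoff q.1 q'.2 q.2 hne2
      have h3 := hpivpos q.1 q'.2
      have h4 := hpivpos q.1 q.2
      have : 0 ≤ Q q.1 q'.2 q.2 * piv q.1 q'.2 / piv q.1 q.2 := by positivity
      linarith
    · exact le_refl 0
  have hKentry : ∀ q q' : Fin m × Fin n, Kmat Q piv N β q q'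
      = β q.1 q.2 * ((if q = q' then 1 else 0) - Fstar N piv q q') + Lstar Q piv q q' := by
    intro q q'
    show (pairDiag β * (1 - Fstar N piv) + Lstar Q piv) q q' = _
    rw [Matrix.add_apply, pairDiag, Matrix.diagonal_mul, Matrix.sub_apply, Matrix.one_apply]
  have hKrow : ∀ q, ∑ q', Kmat Q piv N β q q' = 0 := by
    intro q
    simp only [hKentry]
    rw [Finset.sum_add_distrib, hLrow, ← Finset.mul_sum, Finset.sum_sub_distrib, hFrow,
      Finset.sum_ite_eq, if_pos (Finset.mem_univ q)]
    ring
  have hKoff : ∀ q q', q ≠ q' → Kmat Q piv N β q q' ≤ 0 := by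
    intro q q' hne'
    rw [hKentry, if_neg hne']
    have h1 := hF0 q q'
    have h2 := hLoff q q' hne'
    have h3 := hβ q.1 q.2
    nlinarith
  have hwK : ∀ q, ∑ q', w q' * Kmat Q piv N β q' q = 0 := by
    intro q
    have := congrFun hwnull q
    simpa [Matrix.vecMul, dotProduct] using this
  have hSentry : ∀ q q', Smat Q piv N β w q q'
      = (w q * Kmat Q piv N β q q' + Kmat Q piv N β q' q * w q') / 2 := by
    intro q q'
    show ((1:ℝ)/2) • (Matrix.diagonal w * Kmat Q piv N β
      + (Kmat Q piv N β)ᵀ * Matrix.diagonal w) q q' = _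
    rw [Matrix.add_apply, Matrix.diagonal_mul, Matrix.mul_diagonal,
      Matrix.transpose_apply, smul_eq_mul]
    ring
  have hSsym : ∀ p q', Smat Q piv N β w p q' = Smat Q piv N β w q' p := by
    intro p q'; rw [hSentry, hSentry]; ring
  have hSrow : ∀ p, ∑ q', Smat Q piv N β w p q' = 0 := by
    intro p
    simp only [hSentry]
    rw [← Finset.sum_div, Finset.sum_add_distrib, ← Finset.mul_sum, hKrow p]
    have : ∑ q', Kmat Q piv N β q' p * w q' = 0 := by
      rw [← hwK p]
      exact Finset.sum_congr rfl fun _ _ => mul_comm _ _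
    rw [this]
    ring
  have hScol : ∀ q', ∑ p, Smat Q piv N β w p q' = 0 := by
    intro q'
    rw [← hSrow q']
    exact Finset.sum_congr rfl fun p _ => hSsym p q'
  have hSoff : ∀ p q', p ≠ q' → Smat Q piv N β w p q' ≤ 0 := by
    intro p q' hne'
    rw [hSentry]
    have h1 := hKoff p q' hne'
    have h2 := hKoff q' p (Ne.symm hne')
    have h3 := hwpos p
    have h4 := hwpos q'
    nlinarith
  have hSone : Smat Q piv N β w *ᵥ (fun _ => (1:ℝ)) = 0 := by
    funext p
    simpa [Matrix.mulVec, dotProduct] using hSrow p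
  have hAentry : ∀ q q' : Fin m × Fin n,
      (pairDiag β * Fstar N piv - pairDiag δ - Lstar Q piv) q q'
      = -(Kmat Q piv N β q q') - (if q = q' then δ q.1 q.2 - β q.1 q.2 else 0) := by
    intro q q'
    rw [hKentry]
    show (pairDiag β * Fstar N piv) q q' - pairDiag δ q q' - Lstar Q piv q q' = _
    rw [pairDiag, pairDiag, Matrix.diagonal_mul, Matrix.diagonal_apply]
    split_ifs with h
    · subst h; ring
    · ring
  -- the key quadratic-form inequality
  have hPhi : ∀ x : Fin m × Fin n → ℝ,
      0 ≤ x ⬝ᵥ Smat Q piv N β w *ᵥ x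
        + ∑ q, w q * (δ q.1 q.2 - β q.1 q.2) * x q ^ 2 := by
    intro x
    by_cases hs0 : 0 ≤ s
    · have h1 : 0 ≤ x ⬝ᵥ Smat Q piv N β w *ᵥ x :=
        quad_nonneg_laplacian _ hSsym hSrow hSoff x
      have h2 : 0 ≤ ∑ q, w q * (δ q.1 q.2 - β q.1 q.2) * x q ^ 2 :=
        Finset.sum_nonneg fun q _ => mul_nonneg (mul_nonneg (hwpos q).le
          (by have := hs_le q.2 q.1; linarith)) (sq_nonneg _)
      linarith
    · push_neg at hs0
      have hnm2 : (2:ℝ) ≤ (n:ℝ) * (m:ℝ) := by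
        have h : (2:ℕ) ≤ n * m := le_trans hn (Nat.le_mul_of_pos_right n hm0)
        exact_mod_cast h
      have hnmpos : (0:ℝ) < (n:ℝ) * (m:ℝ) := by linarith
      have hcard : (Fintype.card (Fin m × Fin n) : ℝ) = (n:ℝ) * (m:ℝ) := by
        simp [Fintype.card_prod]
        ring
      have hDpos : 0 < (1 + Real.sqrt (1 + lam2 /
          (∑ q : Fin m × Fin n, w q * (δ q.1 q.2 - β q.1 q.2 - s)))) ^ 2 * ((n:ℝ) * (m:ℝ)) + 1 := by
        positivity
      have hlam2pos : 0 < lam2 := by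
        have h1 : 0 < lam2 / ((1 + Real.sqrt (1 + lam2 /
            (∑ q : Fin m × Fin n, w q * (δ q.1 q.2 - β q.1 q.2 - s)))) ^ 2 * ((n:ℝ) * (m:ℝ)) + 1) := by
          linarith [hcond]
        rcases div_pos_iff.1 h1 with ⟨h, _⟩ | ⟨_, h⟩
        · exact h
        · linarith
      have hcd : (-s) * ((1 + Real.sqrt (1 + lam2 /
          (∑ q : Fin m × Fin n, w q * (δ q.1 q.2 - β q.1 q.2 - s)))) ^ 2 * ((n:ℝ) * (m:ℝ)) + 1)
          ≤ lam2 := by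
        rw [← le_div_iff₀ hDpos]
        linarith [hcond]
      have hlow : ∀ i, i ≠ q₀ → lam2 ≤ hS.eigenvalues i := fun i hi => hlam2.2 ⟨i, hi, rfl⟩
      set xbar := (∑ j, x j) / ((n:ℝ) * (m:ℝ)) with hxbar
      set y : Fin m × Fin n → ℝ := fun q => x q - xbar with hy
      have hysum : ∑ j, y j = 0 := by
        simp only [hy, Finset.sum_sub_distrib, Finset.sum_const, Finset.card_univ,
          nsmul_eq_mul, hcard]
        rw [hxbar]
        field_simp
        ring
      have hxy : x = fun q => y q + xbar := by funext q; simp [hy]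
      have hquad : x ⬝ᵥ Smat Q piv N β w *ᵥ x = y ⬝ᵥ Smat Q piv N β w *ᵥ y := by
        conv_lhs => rw [hxy]
        exact quad_shift _ hSrow hScol y xbar
      have hgap : lam2 * ∑ j, y j ^ 2 ≤ y ⬝ᵥ Smat Q piv N β w *ᵥ y :=
        quad_ge_gap hS q₀ lam2 hlam2pos hlow hSone y hysum
      have hU0 : 0 ≤ ∑ j, y j ^ 2 := Finset.sum_nonneg fun j _ => sq_nonneg _
      have husq : Real.sqrt (∑ j, y j ^ 2) ^ 2 = ∑ j, y j ^ 2 := Real.sq_sqrt hU0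
      have hyb : ∀ q, |y q| ≤ Real.sqrt (∑ j, y j ^ 2) := by
        intro q
        rw [← Real.sqrt_sq_eq_abs]
        exact Real.sqrt_le_sqrt
          (Finset.single_le_sum (fun j _ => sq_nonneg (y j)) (Finset.mem_univ q))
      have hxq : ∀ q, (max 0 (|xbar| - Real.sqrt (∑ j, y j ^ 2))) ^ 2 ≤ x q ^ 2 := by
        intro q
        have h2 : xbar = x q - y q := by simp [hy]
        have h3 : |xbar| ≤ |x q| + |y q| := by
          rw [h2, sub_eq_add_neg]
          calc |x q + -y q| ≤ |x q| + |-y q| := abs_add_le _ _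
            _ = |x q| + |y q| := by rw [abs_neg]
        have h1 : |xbar| - Real.sqrt (∑ j, y j ^ 2) ≤ |x q| := by
          linarith [hyb q]
        have hmax0 : max 0 (|xbar| - Real.sqrt (∑ j, y j ^ 2)) ≤ |x q| :=
          max_le (abs_nonneg _) h1
        calc (max 0 (|xbar| - Real.sqrt (∑ j, y j ^ 2))) ^ 2 ≤ |x q| ^ 2 :=
              pow_le_pow_left₀ (le_max_left _ _) hmax0 2
          _ = x q ^ 2 := sq_abs _
      have hsplit : ∑ q, w q * (δ q.1 q.2 - β q.1 q.2) * x q ^ 2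
          = ∑ q, w q * (δ q.1 q.2 - β q.1 q.2 - s) * x q ^ 2
            + s * ∑ q, w q * x q ^ 2 := by
        rw [Finset.mul_sum, ← Finset.sum_add_distrib]
        apply Finset.sum_congr rfl; intros; ring
      have hterm1 : (∑ q : Fin m × Fin n, w q * (δ q.1 q.2 - β q.1 q.2 - s))
          * (max 0 (|xbar| - Real.sqrt (∑ j, y j ^ 2))) ^ 2
          ≤ ∑ q, w q * (δ q.1 q.2 - β q.1 q.2 - s) * x q ^ 2 := by
        rw [Finset.sum_mul]
        apply Finset.sum_le_sum
        intro q _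
        have hwr : 0 ≤ w q * (δ q.1 q.2 - β q.1 q.2 - s) :=
          mul_nonneg (hwpos q).le (by have := hs_le q.2 q.1; linarith)
        exact mul_le_mul_of_nonneg_left (hxq q) hwr
      have hterm2 : s * ∑ q, x q ^ 2 ≤ s * ∑ q, w q * x q ^ 2 := by
        apply mul_le_mul_of_nonpos_left _ hs0.le
        apply Finset.sum_le_sum; intro q _
        nlinarith [sq_nonneg (x q), hwpos q, hwle q]
      have hnormx : ∑ q, x q ^ 2 = ((n:ℝ) * (m:ℝ)) * xbar ^ 2 + ∑ j, y j ^ 2 := by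
        have hterm : ∀ q, x q ^ 2 = xbar ^ 2 + 2 * xbar * y q + y q ^ 2 := by
          intro q; simp only [hy]; ring
        simp only [hterm]
        rw [Finset.sum_add_distrib, Finset.sum_add_distrib, Finset.sum_const,
          Finset.card_univ, nsmul_eq_mul, hcard, ← Finset.mul_sum, hysum]
        ring
      have hkey := scalar_key (∑ q : Fin m × Fin n, w q * (δ q.1 q.2 - β q.1 q.2 - s))
        lam2 (-s) ((n:ℝ) * (m:ℝ)) (|xbar|) (Real.sqrt (∑ j, y j ^ 2))
        hsum_pos (by linarith) hnm2 (abs_nonneg _) (Real.sqrt_nonneg _) hcd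
      rw [husq, sq_abs] at hkey
      rw [hquad, hsplit]
      have hfin : s * (((n:ℝ) * (m:ℝ)) * xbar ^ 2 + ∑ j, y j ^ 2)
          ≤ s * ∑ q, w q * x q ^ 2 := by
        rw [← hnormx]; exact hterm2
      linarith [hgap, hterm1, hfin, hkey]
  -- weighted quadratic form identity for the target matrix
  have hWA : ∀ x : Fin m × Fin n → ℝ,
      ∑ q, w q * x q * ((pairDiag β * Fstar N piv - pairDiag δ - Lstar Q piv) *ᵥ x) q
      = -(x ⬝ᵥ Smat Q piv N β w *ᵥ x)
        - ∑ q, w q * (δ q.1 q.2 - β q.1 q.2) * x q ^ 2 := by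
    intro x
    have e1 : x ⬝ᵥ Smat Q piv N β w *ᵥ x
        = ∑ q, ∑ q', w q * Kmat Q piv N β q q' * (x q * x q') := by
      calc x ⬝ᵥ Smat Q piv N β w *ᵥ x
          = ∑ q, ∑ q', x q * (Smat Q piv N β w q q' * x q') := by
            simp only [dotProduct, Matrix.mulVec, Finset.mul_sum]
        _ = ∑ q, ∑ q', (w q * Kmat Q piv N β q q' * (x q * x q')
              + Kmat Q piv N β q' q * w q' * (x q * x q')) / 2 := by
            apply Finset.sum_congr rfl; intro q _
            apply Finset.sum_congr rfl; intro q' _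
            rw [hSentry]; ring
        _ = ∑ q, ((∑ q', w q * Kmat Q piv N β q q' * (x q * x q'))
              + ∑ q', Kmat Q piv N β q' q * w q' * (x q * x q')) / 2 := by
            apply Finset.sum_congr rfl; intro q _
            rw [← Finset.sum_div, Finset.sum_add_distrib]
        _ = ((∑ q, ∑ q', w q * Kmat Q piv N β q q' * (x q * x q'))
              + ∑ q, ∑ q', Kmat Q piv N β q' q * w q' * (x q * x q')) / 2 := by
            rw [← Finset.sum_div, Finset.sum_add_distrib]
        _ = ∑ q, ∑ q', w q * Kmat Q piv N β q q' * (x q * x q') := by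
            have hswap : ∑ q, ∑ q', Kmat Q piv N β q' q * w q' * (x q * x q')
                = ∑ q, ∑ q', w q * Kmat Q piv N β q q' * (x q * x q') := by
              rw [Finset.sum_comm]
              apply Finset.sum_congr rfl; intro q _
              apply Finset.sum_congr rfl; intro q' _
              ring
            rw [hswap]; ring
    have e2 : ∀ q, w q * x q * ((pairDiag β * Fstar N piv - pairDiag δ - Lstar Q piv) *ᵥ x) q
        = (∑ q', -(w q * Kmat Q piv N β q q' * (x q * x q')))
          - w q * (δ q.1 q.2 - β q.1 q.2) * x q ^ 2 := by
      intro q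
      have hmv : ((pairDiag β * Fstar N piv - pairDiag δ - Lstar Q piv) *ᵥ x) q
          = ∑ q', (pairDiag β * Fstar N piv - pairDiag δ - Lstar Q piv) q q' * x q' := rfl
      rw [hmv, Finset.mul_sum]
      have hterm : ∀ q', w q * x q * ((pairDiag β * Fstar N piv - pairDiag δ - Lstar Q piv) q q' * x q')
          = -(w q * Kmat Q piv N β q q' * (x q * x q'))
            - (if q = q' then (δ q.1 q.2 - β q.1 q.2) * (w q * x q * x q') else 0) := by
        intro q'
        rw [hAentry]
        split_ifs with h
        · ring
        · ring
      simp only [hterm]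
      rw [Finset.sum_sub_distrib]
      congr 1
      rw [Finset.sum_ite_eq, if_pos (Finset.mem_univ q)]
      ring
    calc ∑ q, w q * x q * ((pairDiag β * Fstar N piv - pairDiag δ - Lstar Q piv) *ᵥ x) q
        = ∑ q, ((∑ q', -(w q * Kmat Q piv N β q q' * (x q * x q')))
            - w q * (δ q.1 q.2 - β q.1 q.2) * x q ^ 2) := by
          apply Finset.sum_congr rfl; intro q _; exact e2 q
      _ = (∑ q, ∑ q', -(w q * Kmat Q piv N β q q' * (x q * x q')))
            - ∑ q, w q * (δ q.1 q.2 - β q.1 q.2) * x q ^ 2 := Finset.sum_sub_distrib _ _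
      _ = -(x ⬝ᵥ Smat Q piv N β w *ᵥ x)
            - ∑ q, w q * (δ q.1 q.2 - β q.1 q.2) * x q ^ 2 := by
          rw [e1]
          congr 1
          rw [← Finset.sum_neg_distrib]
          apply Finset.sum_congr rfl; intro q _
          rw [← Finset.sum_neg_distrib]
  -- conclude via eigenvectors
  apply Real.sSup_le _ le_rfl
  rintro r ⟨z, hz, rfl⟩
  obtain ⟨v, hv0, hv⟩ := exists_eigvec _ z hz
  have hcomp : ∀ q, ∑ q', ((pairDiag β * Fstar N piv - pairDiag δ - Lstar Q piv) q q' : ℂ) * v q'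
      = z * v q := by
    intro q
    have h := congrFun hv q
    simpa [Matrix.mulVec, dotProduct, Matrix.map_apply] using h
  have hRe : ∀ q, ((pairDiag β * Fstar N piv - pairDiag δ - Lstar Q piv) *ᵥ (fun p => (v p).re)) q
      = z.re * (v q).re - z.im * (v q).im := by
    intro q
    have h := congrArg Complex.re (hcomp q)
    rw [Complex.re_sum] at h
    simp only [Complex.mul_re, Complex.ofReal_re, Complex.ofReal_im, zero_mul, sub_zero] at h
    exact h
  have hIm : ∀ q, ((pairDiag β * Fstar N piv - pairDiag δ - Lstar Q piv) *ᵥ (fun p => (v p).im)) q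
      = z.re * (v q).im + z.im * (v q).re := by
    intro q
    have h := congrArg Complex.im (hcomp q)
    rw [Complex.im_sum] at h
    simp only [Complex.mul_im, Complex.ofReal_re, Complex.ofReal_im, zero_mul, add_zero] at h
    have hmv : ((pairDiag β * Fstar N piv - pairDiag δ - Lstar Q piv) *ᵥ (fun p => (v p).im)) q
        = ∑ q', (pairDiag β * Fstar N piv - pairDiag δ - Lstar Q piv) q q' * (v q').im := rfl
    rw [hmv, h]
  have hP : 0 < ∑ q, w q * ((v q).re ^ 2 + (v q).im ^ 2) := by
    obtain ⟨q, hq⟩ : ∃ q, v q ≠ 0 := by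
      by_contra h; push_neg at h; exact hv0 (funext fun q => h q)
    apply Finset.sum_pos' (fun q' _ => mul_nonneg (hwpos q').le (by positivity))
    refine ⟨q, Finset.mem_univ q, mul_pos (hwpos q) ?_⟩
    have h1 := Complex.normSq_pos.2 hq
    have hns : Complex.normSq (v q) = (v q).re ^ 2 + (v q).im ^ 2 := by
      rw [Complex.normSq_apply]; ring
    rwa [hns] at h1
  have hsum : z.re * ∑ q, w q * ((v q).re ^ 2 + (v q).im ^ 2)
      = (∑ q, w q * (fun p => (v p).re) q
          * ((pairDiag β * Fstar N piv - pairDiag δ - Lstar Q piv) *ᵥ (fun p => (v p).re)) q)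
        + ∑ q, w q * (fun p => (v p).im) q
          * ((pairDiag β * Fstar N piv - pairDiag δ - Lstar Q piv) *ᵥ (fun p => (v p).im)) q := by
    rw [Finset.mul_sum, ← Finset.sum_add_distrib]
    apply Finset.sum_congr rfl; intro q _
    rw [hRe q, hIm q]; ring
  rw [hWA (fun p => (v p).re), hWA (fun p => (v p).im)] at hsum
  have h1 := hPhi (fun p => (v p).re)
  have h2 := hPhi (fun p => (v p).im)
  nlinarith [hP, hsum, h1, h2]
end

section
/- Let A ∈ ℝ^{k×k} be an irreducible Laplacian matrix of a strongly connected digraph, i.e. A has nonpositive off-diagonal entries, zero row sums, and the digraph with an edge (i,j) whenever A_{ij} ≠ 0 for i ≠ j is strongly connected; and let Δ ∈ ℝ^{k×k} be a nonnegative diagonal matrix with at least one positive diagonal entry. Then A + Δ is a nonsingular M-matrix: it is invertible, every eigenvalue of A + Δ has positive real part, and (A + Δ)^{-1} is entrywise positive. -/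
open Matrix BigOperators Finset

private lemma lap_prop {k : ℕ} {A : Matrix (Fin k) (Fin k) ℝ}
    (hirr : ∀ i j : Fin k,
      Relation.ReflTransGen (fun a b => a ≠ b ∧ A a b ≠ 0) i j)
    (S : Fin k → Prop)
    (hstep : ∀ a, S a → ∀ c, a ≠ c → A a c ≠ 0 → S c)
    (i : Fin k) (hi : S i) : ∀ j, S j := by
  intro j
  have h := hirr i j
  induction h with
  | refl => exact hi
  | tail _ he ih => exact hstep _ ih _ he.1 he.2

private lemma lap_pos_solve {k : ℕ} (hk : 2 ≤ k)
    (A : Matrix (Fin k) (Fin k) ℝ)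
    (hoff : ∀ i j : Fin k, i ≠ j → A i j ≤ 0)
    (hrow : ∀ i : Fin k, ∑ j, A i j = 0)
    (hirr : ∀ i j : Fin k,
      Relation.ReflTransGen (fun a b => a ≠ b ∧ A a b ≠ 0) i j)
    (d : Fin k → ℝ) (hd : ∀ i, 0 ≤ d i)
    (x b : Fin k → ℝ) (hmul : (A + Matrix.diagonal d) *ᵥ x = b)
    (hb : ∀ i, 0 ≤ b i) (hbne : ∃ i, b i ≠ 0) : ∀ i, 0 < x i := by
  haveI : NeZero k := ⟨by omega⟩
  by_contra hcon
  push_neg at hcon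
  obtain ⟨i1, hi1⟩ := hcon
  obtain ⟨i0, -, hmin⟩ := Finset.exists_min_image univ x univ_nonempty
  set m := x i0 with hm
  have hmle : m ≤ 0 := le_trans (hmin i1 (mem_univ _)) hi1
  have hmin' : ∀ j, m ≤ x j := fun j => hmin j (mem_univ _)
  have hterm : ∀ i, ∀ l ∈ univ.erase i, A i l * (x l - m) ≤ 0 := by
    intro i l hl
    have h1 := hoff i l (Ne.symm (Finset.ne_of_mem_erase hl))
    have h2 := sub_nonneg.mpr (hmin' l)
    nlinarith
  have key : ∀ i, x i = m → b i = 0 ∧ ∀ l, i ≠ l → A i l ≠ 0 → x l = m := by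
    intro i him
    have hbi : b i = ∑ l, (A + Matrix.diagonal d) i l * x l := by
      rw [← hmul]; simp [Matrix.mulVec, dotProduct]
    have hrowsum : ∑ l, (A + Matrix.diagonal d) i l = d i := by
      simp [Matrix.add_apply, Finset.sum_add_distrib, hrow i, Matrix.diagonal_apply]
    have h1 : ∑ l, (A + Matrix.diagonal d) i l * x l
        = (∑ l, (A + Matrix.diagonal d) i l * (x l - m)) + m * d i := by
      have e : ∀ l, (A + Matrix.diagonal d) i l * x l
          = (A + Matrix.diagonal d) i l * (x l - m) + (A + Matrix.diagonal d) i l * m := by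
        intro l; ring
      simp_rw [e, Finset.sum_add_distrib, ← Finset.sum_mul, hrowsum]
      ring
    have h2 : ∑ l, (A + Matrix.diagonal d) i l * (x l - m)
        = ∑ l ∈ univ.erase i, A i l * (x l - m) := by
      rw [← Finset.add_sum_erase _ _ (mem_univ i), him, sub_self, mul_zero, zero_add]
      refine Finset.sum_congr rfl fun l hl => ?_
      rw [Matrix.add_apply, Matrix.diagonal_apply_ne d (Finset.ne_of_mem_erase hl).symm, add_zero]
    have hsplit : b i = (∑ l ∈ univ.erase i, A i l * (x l - m)) + m * d i := by
      rw [hbi, h1, h2]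
    have hsum_le : ∑ l ∈ univ.erase i, A i l * (x l - m) ≤ 0 :=
      Finset.sum_nonpos (hterm i)
    have hmd : m * d i ≤ 0 := mul_nonpos_of_nonpos_of_nonneg hmle (hd i)
    have hbi0 : b i = 0 := le_antisymm (by rw [hsplit]; linarith) (hb i)
    have hsum0 : ∑ l ∈ univ.erase i, A i l * (x l - m) = 0 := by
      rw [hsplit] at hbi0; linarith
    refine ⟨hbi0, fun l hil hAl => ?_⟩
    have hl : l ∈ univ.erase i := mem_erase.mpr ⟨Ne.symm hil, mem_univ l⟩
    have h0 := (Finset.sum_eq_zero_iff_of_nonpos (hterm i)).mp hsum0 l hl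
    rcases mul_eq_zero.mp h0 with h | h
    · exact absurd h hAl
    · linarith [sub_eq_zero.mp h]
  have hall : ∀ j, x j = m :=
    lap_prop hirr (fun j => x j = m) (fun a ha c h1 h2 => (key a ha).2 c h1 h2) i0 rfl
  obtain ⟨i2, hb2⟩ := hbne
  exact hb2 (key i2 (hall i2)).1

private lemma lap_spec {k : ℕ} (hk : 2 ≤ k)
    (A : Matrix (Fin k) (Fin k) ℝ)
    (hoff : ∀ i j : Fin k, i ≠ j → A i j ≤ 0)
    (hrow : ∀ i : Fin k, ∑ j, A i j = 0)
    (hirr : ∀ i j : Fin k,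
      Relation.ReflTransGen (fun a b => a ≠ b ∧ A a b ≠ 0) i j)
    (d : Fin k → ℝ) (hd : ∀ i, 0 ≤ d i) (hdpos : ∃ i, 0 < d i) :
    ∀ z ∈ spectrum ℂ ((A + Matrix.diagonal d).map Complex.ofReal), 0 < z.re := by
  haveI : NeZero k := ⟨by omega⟩
  intro z hz
  by_contra hre
  push_neg at hre
  set B := (A + Matrix.diagonal d).map Complex.ofReal with hBdef
  rw [spectrum.mem_iff, Matrix.isUnit_iff_isUnit_det, isUnit_iff_ne_zero, not_not] at hz
  obtain ⟨v, hv0, hv⟩ := Matrix.exists_mulVec_eq_zero_iff.mpr hz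
  have hv' : B *ᵥ v = z • v := by
    rw [Matrix.sub_mulVec, Algebra.algebraMap_eq_smul_one, Matrix.smul_mulVec,
      Matrix.one_mulVec] at hv
    exact (sub_eq_zero.mp hv).symm
  obtain ⟨i0, -, hmax⟩ := Finset.exists_max_image univ (fun j => ‖v j‖) univ_nonempty
  set m := ‖v i0‖ with hm
  have hmax' : ∀ j, ‖v j‖ ≤ m := fun j => hmax j (mem_univ _)
  have hmpos : 0 < m := by
    obtain ⟨j, hj⟩ := Function.ne_iff.mp hv0
    exact lt_of_lt_of_le (by simpa using hj : 0 < ‖v j‖) (hmax' j)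
  have key : ∀ i, ‖v i‖ = m →
      d i = 0 ∧ ∀ l, i ≠ l → A i l ≠ 0 → ‖v l‖ = m := by
    intro i him
    have hvi : ∑ l, B i l * v l = z * v i := by
      have := congrFun hv' i
      simpa [Matrix.mulVec, dotProduct] using this
    have hBil : ∀ l, l ≠ i → B i l = (A i l : ℂ) := by
      intro l hl
      simp [hBdef, Matrix.map_apply, Matrix.add_apply,
        Matrix.diagonal_apply_ne d (Ne.symm hl)]
    have hBii : B i i = ((A i i + d i : ℝ) : ℂ) := by
      simp [hBdef, Matrix.map_apply, Matrix.add_apply]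
    have heq : (((A i i + d i : ℝ) : ℂ) - z) * v i
        = ∑ l ∈ univ.erase i, (-(A i l) : ℝ) * v l := by
      have hsplit : ∑ l, B i l * v l
          = B i i * v i + ∑ l ∈ univ.erase i, B i l * v l :=
        (Finset.add_sum_erase _ _ (mem_univ i)).symm
      rw [hsplit] at hvi
      have : ∀ l ∈ univ.erase i, B i l * v l = -(((-(A i l) : ℝ)) * v l) := by
        intro l hl
        rw [hBil l (Finset.ne_of_mem_erase hl)]
        push_cast
        ring
      rw [Finset.sum_congr rfl this, Finset.sum_neg_distrib, hBii] at hvi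
      linear_combination hvi
    -- take absolute values
    have habs : ‖(((A i i + d i : ℝ) : ℂ) - z)‖ * m
        ≤ ∑ l ∈ univ.erase i, (-(A i l)) * ‖v l‖ := by
      calc ‖(((A i i + d i : ℝ) : ℂ) - z)‖ * m
          = ‖(((A i i + d i : ℝ) : ℂ) - z) * v i‖ := by
            rw [norm_mul, him]
        _ = ‖∑ l ∈ univ.erase i, ((-(A i l) : ℝ) : ℂ) * v l‖ := by rw [heq]
        _ ≤ ∑ l ∈ univ.erase i, ‖((-(A i l) : ℝ) : ℂ) * v l‖ :=
            norm_sum_le _ _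
        _ = ∑ l ∈ univ.erase i, (-(A i l)) * ‖v l‖ := by
            refine Finset.sum_congr rfl fun l hl => ?_
            rw [norm_mul, Complex.norm_real, Real.norm_eq_abs,
              abs_of_nonneg (neg_nonneg.mpr (hoff i l (Finset.ne_of_mem_erase hl).symm))]
    have hAii : A i i = ∑ l ∈ univ.erase i, (-(A i l)) := by
      have := hrow i
      rw [← Finset.add_sum_erase _ _ (mem_univ i)] at this
      rw [Finset.sum_neg_distrib]
      linarith
    have hreabs : A i i + d i - z.re
        ≤ ‖(((A i i + d i : ℝ) : ℂ) - z)‖ := by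
      have := Complex.re_le_norm ((((A i i + d i : ℝ) : ℂ) - z))
      simpa using this
    have hchain : (A i i + d i - z.re) * m
        ≤ ∑ l ∈ univ.erase i, (-(A i l)) * ‖v l‖ := by
      refine le_trans ?_ habs
      exact mul_le_mul_of_nonneg_right hreabs hmpos.le
    have hub : ∑ l ∈ univ.erase i, (-(A i l)) * ‖v l‖
        ≤ ∑ l ∈ univ.erase i, (-(A i l)) * m := by
      refine Finset.sum_le_sum fun l hl => ?_
      exact mul_le_mul_of_nonneg_left (hmax' l)
        (neg_nonneg.mpr (hoff i l (Finset.ne_of_mem_erase hl).symm))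
    have hterm : ∀ l ∈ univ.erase i, (-(A i l)) * (‖v l‖ - m) ≤ 0 := by
      intro l hl
      have h1 := neg_nonneg.mpr (hoff i l (Finset.ne_of_mem_erase hl).symm)
      have h2 := sub_nonpos.mpr (hmax' l)
      exact mul_nonpos_of_nonneg_of_nonpos h1 h2
    have hsum : ∑ l ∈ univ.erase i, (-(A i l)) * (‖v l‖ - m)
        = ∑ l ∈ univ.erase i, (-(A i l)) * ‖v l‖
          - ∑ l ∈ univ.erase i, (-(A i l)) * m := by
      rw [← Finset.sum_sub_distrib]
      exact Finset.sum_congr rfl fun l _ => by ring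
    have hAm : ∑ l ∈ univ.erase i, (-(A i l)) * m = A i i * m := by
      rw [hAii, Finset.sum_mul]
    have hge : (d i - z.re) * m ≤ ∑ l ∈ univ.erase i, (-(A i l)) * (‖v l‖ - m) := by
      rw [hsum, hAm]
      nlinarith [hchain]
    have hle : ∑ l ∈ univ.erase i, (-(A i l)) * (‖v l‖ - m) ≤ 0 :=
      Finset.sum_nonpos hterm
    have hdim : (d i - z.re) * m ≤ 0 := le_trans hge hle
    have hdi0 : d i = 0 := by nlinarith [hd i, hmpos]
    have hsum0 : ∑ l ∈ univ.erase i, (-(A i l)) * (‖v l‖ - m) = 0 := by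
      have : 0 ≤ (d i - z.re) * m := by nlinarith [hd i, hmpos]
      linarith
    refine ⟨hdi0, fun l hil hAl => ?_⟩
    have hl : l ∈ univ.erase i := mem_erase.mpr ⟨Ne.symm hil, mem_univ l⟩
    have h0 := (Finset.sum_eq_zero_iff_of_nonpos hterm).mp hsum0 l hl
    rcases mul_eq_zero.mp h0 with h | h
    · exact absurd (by linarith [neg_eq_zero.mp h] : A i l = 0) hAl
    · linarith [sub_eq_zero.mp h]
  have hall : ∀ j, ‖v j‖ = m :=
    lap_prop hirr (fun j => ‖v j‖ = m)
      (fun a ha c h1 h2 => (key a ha).2 c h1 h2) i0 rfl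
  obtain ⟨j0, hj0⟩ := hdpos
  exact absurd (key j0 (hall j0)).1 (ne_of_gt hj0)

/-- Let `A` be an irreducible Laplacian matrix of a strongly connected
digraph (nonpositive off-diagonal entries, zero row sums, strongly connected support
digraph) and let `Δ = diagonal d` be a nonnegative diagonal matrix with at least one
positive diagonal entry. Then `A + Δ` is a nonsingular M-matrix: it is invertible, every
(complex) eigenvalue of `A + Δ` has positive real part, and `(A + Δ)⁻¹` is entrywise
positive. -/
theorem perturbed_irreducible_laplacian_is_nonsingular_M_matrix
    {k : ℕ} (hk : 2 ≤ k)
    (A : Matrix (Fin k) (Fin k) ℝ)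
    (hoff : ∀ i j : Fin k, i ≠ j → A i j ≤ 0)
    (hrow : ∀ i : Fin k, ∑ j, A i j = 0)
    (hirr : ∀ i j : Fin k,
      Relation.ReflTransGen (fun a b => a ≠ b ∧ A a b ≠ 0) i j)
    (d : Fin k → ℝ) (hd : ∀ i, 0 ≤ d i) (hdpos : ∃ i, 0 < d i) :
    IsUnit (A + Matrix.diagonal d) ∧
      (∀ z ∈ spectrum ℂ ((A + Matrix.diagonal d).map Complex.ofReal), 0 < z.re) ∧
      (∀ i j : Fin k, 0 < (A + Matrix.diagonal d)⁻¹ i j) := by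
  have h2 := lap_spec hk A hoff hrow hirr d hd hdpos
  set B := A + Matrix.diagonal d with hBdef
  have h1 : IsUnit B := by
    rw [Matrix.isUnit_iff_isUnit_det, isUnit_iff_ne_zero]
    intro hdet
    have hdetC : (B.map Complex.ofReal).det = 0 := by
      have he : B.map Complex.ofReal = Complex.ofRealHom.mapMatrix B := rfl
      rw [he, ← RingHom.map_det, hdet, _root_.map_zero]
    have h0 : (0 : ℂ) ∈ spectrum ℂ (B.map Complex.ofReal) := by
      rw [spectrum.mem_iff]
      intro hu
      rw [map_zero, zero_sub] at hu
      have : IsUnit (B.map Complex.ofReal) := by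
        have := hu.neg
        rwa [neg_neg] at this
      rw [Matrix.isUnit_iff_isUnit_det, isUnit_iff_ne_zero] at this
      exact this hdetC
    simpa using h2 0 h0
  refine ⟨h1, h2, ?_⟩
  intro i j
  have hdet : IsUnit B.det := (Matrix.isUnit_iff_isUnit_det B).mp h1
  have hBB : B * B⁻¹ = 1 := Matrix.mul_nonsing_inv B hdet
  have := lap_pos_solve hk A hoff hrow hirr d hd
    (fun i => B⁻¹ i j) (fun i => (1 : Matrix (Fin k) (Fin k) ℝ) i j)
    (by
      funext i
      simp only [Matrix.mulVec, dotProduct]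
      rw [← Matrix.mul_apply, hBB])
    (by
      intro i
      show 0 ≤ (1 : Matrix (Fin k) (Fin k) ℝ) i j
      rw [Matrix.one_apply]
      split <;> norm_num)
    ⟨j, by simp [Matrix.one_apply]⟩
  exact this i
end

section
/- The matrix L* + D is invertible, A := (L* + D)^{-1} B is entrywise nonnegative with each diagonal layer block entrywise positive, and the product A F* is an entrywise-positive (hence irreducible) nm×nm matrix. -/
open Matrix BigOperators Finset

/-- The matrix `A = (L* + D)⁻¹ B`. -/
noncomputable def Amat {n m : ℕ} (Q : Fin m → Matrix (Fin n) (Fin n) ℝ)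
    (piv : Fin m → Fin n → ℝ) (β δ : Fin m → Fin n → ℝ) :
    Matrix (Fin m × Fin n) (Fin m × Fin n) ℝ :=
  (Lstar Q piv + pairDiag δ)⁻¹ * pairDiag β

section Aux
variable {n m : ℕ} (Q : Fin m → Matrix (Fin n) (Fin n) ℝ)
    (piv : Fin m → Fin n → ℝ) (δ : Fin m → Fin n → ℝ)

/-- Abbreviation for the matrix `L* + D`. -/
noncomputable def Mbig : Matrix (Fin m × Fin n) (Fin m × Fin n) ℝ :=
  Lstar Q piv + pairDiag δ

lemma mulVec_entry' (x : Fin m × Fin n → ℝ) (α : Fin m) (i : Fin n) :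
    ((Mbig Q piv δ) *ᵥ x) (α, i)
      = (∑ j ∈ Finset.univ \ {i}, Q α i j) * x (α, i) + δ α i * x (α, i)
        - ∑ k ∈ Finset.univ \ {i}, Q α k i * piv α k / piv α i * x (α, k) := by
  classical
  rw [Matrix.mulVec, dotProduct, Fintype.sum_prod_type]
  rw [Finset.sum_eq_single_of_mem α (Finset.mem_univ _) (fun τ _ hτ => ?_)]
  · rw [Finset.sum_eq_sum_sdiff_singleton_add (Finset.mem_univ i)]
    have h1 : ∀ k ∈ Finset.univ \ {i},
        (Mbig Q piv δ) (α, i) (α, k) * x (α, k)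
        = -(Q α k i * piv α k / piv α i * x (α, k)) := by
      intro k hk
      simp only [Finset.mem_sdiff, Finset.mem_singleton] at hk
      have hik : i ≠ k := fun h => hk.2 h.symm
      rw [Mbig, Lstar, pairDiag, Matrix.add_apply,
        Matrix.diagonal_apply_ne _ (by simp [hik]),
        Matrix.of_apply, if_pos rfl, if_neg hik]
      ring
    rw [Finset.sum_congr rfl h1]
    have h2 : (Mbig Q piv δ) (α, i) (α, i) * x (α, i)
        = (∑ j ∈ Finset.univ \ {i}, Q α i j) * x (α, i) + δ α i * x (α, i) := by
      rw [Mbig, Lstar, pairDiag, Matrix.add_apply, Matrix.diagonal_apply_eq,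
        Matrix.of_apply, if_pos rfl, if_pos rfl]
      ring
    rw [h2, Finset.sum_neg_distrib]
    ring
  · apply Finset.sum_eq_zero
    intro k _
    rw [Mbig, Lstar, pairDiag, Matrix.add_apply,
      Matrix.diagonal_apply_ne _ (by simp [Ne.symm hτ]),
      Matrix.of_apply, if_neg (Ne.symm hτ), zero_add, zero_mul]

lemma wsum_eq (hQdiag : ∀ (α : Fin m) (i : Fin n), Q α i i = -∑ j ∈ Finset.univ \ {i}, Q α i j)
    (hpivpos : ∀ α i, 0 < piv α i)
    (hpiveig : ∀ (α : Fin m) (i : Fin n), ∑ j, Q α j i * piv α j = 0)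
    (α : Fin m) (i : Fin n) :
    ∑ k ∈ Finset.univ \ {i}, Q α k i * piv α k / piv α i
      = ∑ j ∈ Finset.univ \ {i}, Q α i j := by
  have h := hpiveig α i
  rw [Finset.sum_eq_sum_sdiff_singleton_add (Finset.mem_univ i)] at h
  rw [hQdiag α i] at h
  have hpi := (hpivpos α i).ne'
  rw [← Finset.sum_div, div_eq_iff hpi]
  linarith [h]
end Aux

section Key
variable {n m : ℕ} {Q : Fin m → Matrix (Fin n) (Fin n) ℝ}
    {piv : Fin m → Fin n → ℝ} {δ : Fin m → Fin n → ℝ}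

lemma propagate {α : Fin m}
    (hQirr : ∀ (i j : Fin n), Relation.ReflTransGen (fun a b => 0 < Q α a b) i j)
    (S : Fin n → Prop)
    (hclosed : ∀ i, S i → ∀ k, 0 < Q α k i → S k) {i0 : Fin n} (h0 : S i0) :
    ∀ k, S k := by
  intro k
  have h := hQirr k i0
  induction h using Relation.ReflTransGen.head_induction_on with
  | refl => exact h0
  | head hab _ ih => exact hclosed _ ih _ hab

/-- If `M *ᵥ x ≥ 0` entrywise then `x ≥ 0`. -/
lemma key_nonneg
    (hQoff : ∀ (α : Fin m) (i j : Fin n), i ≠ j → 0 ≤ Q α i j)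
    (hQdiag : ∀ (α : Fin m) (i : Fin n), Q α i i = -∑ j ∈ Finset.univ \ {i}, Q α i j)
    (hQirr : ∀ (α : Fin m) (i j : Fin n),
      Relation.ReflTransGen (fun a b => 0 < Q α a b) i j)
    (hpivpos : ∀ α i, 0 < piv α i)
    (hpiveig : ∀ (α : Fin m) (i : Fin n), ∑ j, Q α j i * piv α j = 0)
    (hδ : ∀ α i, 0 ≤ δ α i) (hδpos : ∀ α, ∃ k, 0 < δ α k)
    (x : Fin m × Fin n → ℝ)
    (hb : ∀ q, 0 ≤ ((Mbig Q piv δ) *ᵥ x) q) :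
    ∀ q, 0 ≤ x q := by
  by_contra hcon
  push_neg at hcon
  obtain ⟨q0, hq0⟩ := hcon
  obtain ⟨α, i0'⟩ := q0
  have hne : (Finset.univ : Finset (Fin n)).Nonempty := ⟨i0', Finset.mem_univ _⟩
  set c := Finset.univ.inf' hne (fun i => x (α, i)) with hc
  have hcle : ∀ i, c ≤ x (α, i) := fun i => Finset.inf'_le _ (Finset.mem_univ i)
  have hcneg : c < 0 := lt_of_le_of_lt (hcle i0') hq0
  have hclosed : ∀ i, x (α, i) = c → δ α i = 0 ∧ ∀ k, 0 < Q α k i → x (α, k) = c := by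
    intro i hi
    have hbi := hb (α, i)
    rw [mulVec_entry' Q piv δ x α i] at hbi
    have hwsum := wsum_eq Q piv hQdiag hpivpos hpiveig α i
    have hterm : ∀ k ∈ Finset.univ \ {i},
        Q α k i * piv α k / piv α i * c ≤ Q α k i * piv α k / piv α i * x (α, k) := by
      intro k hk
      simp only [Finset.mem_sdiff, Finset.mem_singleton] at hk
      have hw : 0 ≤ Q α k i * piv α k / piv α i :=
        div_nonneg (mul_nonneg (hQoff α k i hk.2) (hpivpos α k).le) (hpivpos α i).le
      exact mul_le_mul_of_nonneg_left (hcle k) hw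
    have hsumge : (∑ j ∈ Finset.univ \ {i}, Q α i j) * c
        ≤ ∑ k ∈ Finset.univ \ {i}, Q α k i * piv α k / piv α i * x (α, k) := by
      calc (∑ j ∈ Finset.univ \ {i}, Q α i j) * c
          = ∑ k ∈ Finset.univ \ {i}, Q α k i * piv α k / piv α i * c := by
            rw [← Finset.sum_mul, hwsum]
        _ ≤ _ := Finset.sum_le_sum hterm
    rw [hi] at hbi
    have hδc : 0 ≤ δ α i * c := by linarith
    have hδ0 : δ α i = 0 := by
      rcases (hδ α i).lt_or_eq with h | h
      · nlinarith
      · exact h.symm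
    refine ⟨hδ0, fun k hQk => ?_⟩
    have hcsum : ∑ k ∈ Finset.univ \ {i}, Q α k i * piv α k / piv α i * c
        = (∑ j ∈ Finset.univ \ {i}, Q α i j) * c := by
      rw [← Finset.sum_mul, hwsum]
    have heq : ∑ k ∈ Finset.univ \ {i}, Q α k i * piv α k / piv α i * c
        = ∑ k ∈ Finset.univ \ {i}, Q α k i * piv α k / piv α i * x (α, k) := by
      refine le_antisymm (Finset.sum_le_sum hterm) ?_
      rw [hcsum]
      rw [hδ0] at hbi; linarith
    have hνnn : 0 ≤ ∑ j ∈ Finset.univ \ {i}, Q α i j :=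
      Finset.sum_nonneg (fun j hj => hQoff α i j (fun h => by
        simp only [Finset.mem_sdiff, Finset.mem_singleton] at hj; exact hj.2 h.symm))
    have hki : k ≠ i := by
      intro h
      rw [h, hQdiag α i] at hQk
      linarith
    have hkmem : k ∈ Finset.univ \ {i} := by simp [hki]
    have := (Finset.sum_eq_sum_iff_of_le (fun k hk => by
        simp only [Finset.mem_sdiff, Finset.mem_singleton] at hk
        exact mul_le_mul_of_nonneg_left (hcle k)
          (div_nonneg (mul_nonneg (hQoff α k i hk.2) (hpivpos α k).le) (hpivpos α i).le))).mp
      heq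
    have hkeq := this k hkmem
    have hwpos : 0 < Q α k i * piv α k / piv α i :=
      div_pos (mul_pos hQk (hpivpos α k)) (hpivpos α i)
    exact (mul_left_cancel₀ hwpos.ne' hkeq).symm
  obtain ⟨i0, _, hi0⟩ := Finset.exists_mem_eq_inf' hne (fun i => x (α, i))
  have hall : ∀ k, x (α, k) = c := by
    exact propagate (hQirr α) (fun i => x (α, i) = c)
      (fun i hi k hk => (hclosed i hi).2 k hk) (i0 := i0) hi0.symm
  obtain ⟨k, hk⟩ := hδpos α
  exact absurd ((hclosed k (hall k)).1) hk.ne'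
end Key

section Key2
variable {n m : ℕ} {Q : Fin m → Matrix (Fin n) (Fin n) ℝ}
    {piv : Fin m → Fin n → ℝ} {δ : Fin m → Fin n → ℝ}

lemma key_pos
    (hQoff : ∀ (α : Fin m) (i j : Fin n), i ≠ j → 0 ≤ Q α i j)
    (hQirr : ∀ (α : Fin m) (i j : Fin n),
      Relation.ReflTransGen (fun a b => 0 < Q α a b) i j)
    (hpivpos : ∀ α i, 0 < piv α i)
    (x : Fin m × Fin n → ℝ) (hx : ∀ q, 0 ≤ x q)
    (hb : ∀ q, 0 ≤ ((Mbig Q piv δ) *ᵥ x) q)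
    (σ : Fin m) (j : Fin n) (hbj : 0 < ((Mbig Q piv δ) *ᵥ x) (σ, j)) :
    ∀ i, 0 < x (σ, i) := by
  by_contra hcon
  push_neg at hcon
  obtain ⟨i0, hi0⟩ := hcon
  have hi0' : x (σ, i0) = 0 := le_antisymm hi0 (hx _)
  have hclosed : ∀ i, x (σ, i) = 0 → ∀ k, 0 < Q σ k i → x (σ, k) = 0 := by
    intro i hi k hQk
    have hbi := hb (σ, i)
    rw [mulVec_entry' Q piv δ x σ i, hi] at hbi
    have hterm : ∀ k ∈ Finset.univ \ {i},
        0 ≤ Q σ k i * piv σ k / piv σ i * x (σ, k) := by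
      intro k hk
      simp only [Finset.mem_sdiff, Finset.mem_singleton] at hk
      exact mul_nonneg (div_nonneg (mul_nonneg (hQoff σ k i hk.2) (hpivpos σ k).le)
        (hpivpos σ i).le) (hx _)
    have hsum0 : ∑ k ∈ Finset.univ \ {i}, Q σ k i * piv σ k / piv σ i * x (σ, k) = 0 := by
      have := Finset.sum_nonneg hterm
      linarith
    rcases eq_or_ne k i with hki | hki
    · rw [hki]; exact hi
    have hkmem : k ∈ Finset.univ \ {i} := by simp [hki]
    have hkz := (Finset.sum_eq_zero_iff_of_nonneg hterm).mp hsum0 k hkmem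
    have hwpos : 0 < Q σ k i * piv σ k / piv σ i :=
      div_pos (mul_pos hQk (hpivpos σ k)) (hpivpos σ i)
    rcases mul_eq_zero.mp hkz with h | h
    · exact absurd h hwpos.ne'
    · exact h
  have hall : ∀ k, x (σ, k) = 0 :=
    propagate (hQirr σ) (fun i => x (σ, i) = 0)
      (fun i hi k hk => hclosed i hi k hk) (i0 := i0) hi0'
  have hbj' := hbj
  rw [mulVec_entry' Q piv δ x σ j, hall j] at hbj'
  have : ∑ k ∈ Finset.univ \ {j}, Q σ k j * piv σ k / piv σ j * x (σ, k) = 0 :=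
    Finset.sum_eq_zero (fun k _ => by rw [hall k, mul_zero])
  rw [this] at hbj'
  linarith
end Key2

/-- The matrix `L* + D` is invertible, `A = (L* + D)⁻¹ B` is entrywise
nonnegative with each diagonal layer block entrywise positive, and `A F*` is an
entrywise-positive (hence irreducible) `nm × nm` matrix. -/
theorem Amat_nonneg_and_AFstar_positive
    {n m : ℕ} (hn : 2 ≤ n) (hm : 1 ≤ m)
    (Q : Fin m → Matrix (Fin n) (Fin n) ℝ)
    (hQoff : ∀ (α : Fin m) (i j : Fin n), i ≠ j → 0 ≤ Q α i j)
    (hQdiag : ∀ (α : Fin m) (i : Fin n), Q α i i = -∑ j ∈ Finset.univ \ {i}, Q α i j)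
    (hQirr : ∀ (α : Fin m) (i j : Fin n),
      Relation.ReflTransGen (fun a b => 0 < Q α a b) i j)
    (piv : Fin m → Fin n → ℝ) (hpivpos : ∀ α i, 0 < piv α i)
    (hpiveig : ∀ (α : Fin m) (i : Fin n), ∑ j, Q α j i * piv α j = 0)
    (hpivsum : ∀ α, ∑ i, piv α i = 1)
    (N : Fin m → ℝ) (hN : ∀ α, 0 < N α)
    (β δ : Fin m → Fin n → ℝ)
    (hβ : ∀ α i, 0 < β α i) (hδ : ∀ α i, 0 ≤ δ α i)
    (hδpos : ∀ α, ∃ k, 0 < δ α k)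
 :
    IsUnit (Lstar Q piv + pairDiag δ) ∧
      (∀ q q' : Fin m × Fin n, 0 ≤ Amat Q piv β δ q q') ∧
      (∀ q q' : Fin m × Fin n, q.1 = q'.1 → 0 < Amat Q piv β δ q q') ∧
      (∀ q q' : Fin m × Fin n, 0 < (Amat Q piv β δ * Fstar N piv) q q') ∧
      (∀ q q' : Fin m × Fin n,
        Relation.ReflTransGen
          (fun a b => a ≠ b ∧ (Amat Q piv β δ * Fstar N piv) a b ≠ 0) q q') := by
  classical
  have hMeq : Lstar Q piv + pairDiag δ = Mbig Q piv δ := rfl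
  set M := Mbig Q piv δ with hM
  -- kernel is trivial
  have hker : ∀ x : Fin m × Fin n → ℝ, M *ᵥ x = 0 → x = 0 := by
    intro x hx
    have h1 : ∀ q, 0 ≤ x q :=
      key_nonneg hQoff hQdiag hQirr hpivpos hpiveig hδ hδpos x
        (fun q => by rw [hx]; exact le_refl 0)
    have h2 : ∀ q, 0 ≤ (-x) q :=
      key_nonneg hQoff hQdiag hQirr hpivpos hpiveig hδ hδpos (-x)
        (fun q => by rw [Matrix.mulVec_neg, hx]; simp)
    funext q
    have := h2 q
    simp only [Pi.neg_apply, Pi.zero_apply] at this ⊢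
    linarith [h1 q]
  have hinj : Function.Injective M.mulVec := fun a b hab => by
    have := hker (a - b) (by rw [Matrix.mulVec_sub, hab, sub_self])
    exact sub_eq_zero.mp this
  have hU : IsUnit M := Matrix.mulVec_injective_iff_isUnit.mp hinj
  have hUdet : IsUnit M.det := (Matrix.isUnit_iff_isUnit_det _).mp hU
  have hMM : M * M⁻¹ = 1 := Matrix.mul_nonsing_inv _ hUdet
  -- columns of the inverse
  have hcol : ∀ q' : Fin m × Fin n,
      ∀ q, (M *ᵥ (fun p => M⁻¹ p q')) q = if q = q' then 1 else 0 := by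
    intro q' q
    have h := congrFun (congrFun hMM q) q'
    rw [Matrix.mul_apply] at h
    rw [Matrix.mulVec, dotProduct]
    rw [h, Matrix.one_apply]
  have hcolnn : ∀ q' q : Fin m × Fin n, 0 ≤ (M *ᵥ (fun p => M⁻¹ p q')) q := by
    intro q' q
    rw [hcol q' q]
    split <;> norm_num
  have hinvnn : ∀ q q' : Fin m × Fin n, 0 ≤ M⁻¹ q q' := by
    intro q q'
    exact key_nonneg hQoff hQdiag hQirr hpivpos hpiveig hδ hδpos (fun p => M⁻¹ p q')
      (hcolnn q') q
  -- strict positivity of diagonal blocks of the inverse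
  have hinvpos : ∀ (q q' : Fin m × Fin n), q.1 = q'.1 → 0 < M⁻¹ q q' := by
    intro q q' hqq
    have hbj : 0 < (M *ᵥ (fun p => M⁻¹ p q')) (q'.1, q'.2) := by
      rw [hcol q' (q'.1, q'.2), if_pos rfl]
      norm_num
    have := key_pos hQoff hQirr hpivpos (fun p => M⁻¹ p q')
      (fun p => hinvnn p q') (hcolnn q') q'.1 q'.2 hbj q.2
    rw [← hqq] at this
    exact this
  -- entries of Amat
  have hAmat : ∀ q q' : Fin m × Fin n, Amat Q piv β δ q q' = M⁻¹ q q' * β q'.1 q'.2 := by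
    intro q q'
    rw [Amat, hMeq, pairDiag, Matrix.mul_diagonal]
  have hAnn : ∀ q q' : Fin m × Fin n, 0 ≤ Amat Q piv β δ q q' := by
    intro q q'
    rw [hAmat]
    exact mul_nonneg (hinvnn q q') (hβ q'.1 q'.2).le
  have hApos : ∀ q q' : Fin m × Fin n, q.1 = q'.1 → 0 < Amat Q piv β δ q q' := by
    intro q q' h
    rw [hAmat]
    exact mul_pos (hinvpos q q' h) (hβ q'.1 q'.2)
  -- Fstar entries
  have hFnn : ∀ p q' : Fin m × Fin n, 0 ≤ Fstar N piv p q' := by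
    intro p q'
    rw [Fstar, Matrix.of_apply]
    split
    · exact div_nonneg (mul_nonneg (hN q'.1).le (hpivpos q'.1 p.2).le)
        (Finset.sum_nonneg (fun τ _ => (mul_pos (hN τ) (hpivpos τ p.2)).le))
    · exact le_refl 0
  have hFpos : ∀ p q' : Fin m × Fin n, p.2 = q'.2 → 0 < Fstar N piv p q' := by
    intro p q' h
    rw [Fstar, Matrix.of_apply, if_pos h]
    exact div_pos (mul_pos (hN q'.1) (hpivpos q'.1 p.2))
      (Finset.sum_pos (fun τ _ => mul_pos (hN τ) (hpivpos τ p.2)) ⟨p.1, Finset.mem_univ _⟩)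
  -- positivity of A * Fstar
  have hAFpos : ∀ q q' : Fin m × Fin n, 0 < (Amat Q piv β δ * Fstar N piv) q q' := by
    intro q q'
    rw [Matrix.mul_apply]
    refine Finset.sum_pos' (fun p _ => mul_nonneg (hAnn q p) (hFnn p q'))
      ⟨(q.1, q'.2), Finset.mem_univ _, ?_⟩
    exact mul_pos (hApos q (q.1, q'.2) rfl) (hFpos (q.1, q'.2) q' rfl)
  refine ⟨hMeq ▸ hU, hAnn, hApos, hAFpos, fun q q' => ?_⟩
  rcases eq_or_ne q q' with h | h
  · exact h ▸ Relation.ReflTransGen.refl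
  · exact Relation.ReflTransGen.single ⟨h, (hAFpos q q').ne'⟩
end

section
/- For all vectors p₁, p₂ ∈ ℝ^{nm} with 0 ≤ p₁ ≤ p₂ ≤ 1 entrywise, the matrices I + A(diag(p₁) + (I − diag(p₁))M) and I + A(diag(p₂) + (I − diag(p₂))M) are invertible and H(p₁) ≤ H(p₂) entrywise; that is, the map H is monotone on [0,1]^{nm}. -/
open Matrix BigOperators Finset

/-- The fixed-point map `H(p) = (I + A(diag(p) + (I − diag(p)) M))⁻¹ A p`. -/
noncomputable def Hmap {n m : ℕ} (A Mlap : Matrix (Fin m × Fin n) (Fin m × Fin n) ℝ)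
    (p : Fin m × Fin n → ℝ) : Fin m × Fin n → ℝ :=
  ((1 + A * (Matrix.diagonal p + (1 - Matrix.diagonal p) * Mlap))⁻¹).mulVec (A.mulVec p)


section CoreZ

open Matrix Finset

variable {ι : Type*} [Fintype ι] [DecidableEq ι]

lemma entry_mul_nonneg {A B : Matrix ι ι ℝ} (hA : ∀ i j, 0 ≤ A i j) (hB : ∀ i j, 0 ≤ B i j) :
    ∀ i j, 0 ≤ (A * B) i j := fun i j => by
  rw [Matrix.mul_apply]
  exact Finset.sum_nonneg fun k _ => mul_nonneg (hA i k) (hB k j)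

lemma mulVec_nonneg' {A : Matrix ι ι ℝ} {v : ι → ℝ} (hA : ∀ i j, 0 ≤ A i j)
    (hv : ∀ j, 0 ≤ v j) : ∀ i, 0 ≤ A.mulVec v i := fun i =>
  Finset.sum_nonneg fun k _ => mul_nonneg (hA i k) (hv k)

lemma oneSubK_key [Nonempty ι] {K : Matrix ι ι ℝ}
    (hK : ∀ i j, 0 ≤ K i j) (hrow : ∀ i, ∑ j, K i j < 1) :
    IsUnit (1 - K) ∧ ∀ i j, 0 ≤ (1 - K)⁻¹ i j := by
  have hker : ∀ z : ι → ℝ, (1 - K).mulVec z = 0 → z = 0 := by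
    intro z hz
    by_contra hz0
    obtain ⟨i, -, hi⟩ := Finset.exists_max_image Finset.univ (fun i => |z i|) ⟨Classical.arbitrary ι, Finset.mem_univ _⟩
    have hmaxpos : 0 < |z i| := by
      obtain ⟨j, hj⟩ := Function.ne_iff.mp hz0
      exact lt_of_lt_of_le (abs_pos.mpr hj) (hi j (Finset.mem_univ j))
    have hzi : z i = (K.mulVec z) i := by
      have := congrFun hz i
      simp [Matrix.sub_mulVec, Matrix.one_mulVec, sub_eq_zero] at this
      exact this
    have : |z i| ≤ (∑ j, K i j) * |z i| := by
      calc |z i| = |∑ j, K i j * z j| := by rw [hzi]; rfl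
        _ ≤ ∑ j, |K i j * z j| := Finset.abs_sum_le_sum_abs _ _
        _ ≤ ∑ j, K i j * |z i| := by
            refine Finset.sum_le_sum fun j _ => ?_
            rw [abs_mul, abs_of_nonneg (hK i j)]
            exact mul_le_mul_of_nonneg_left (hi j (Finset.mem_univ j)) (hK i j)
        _ = (∑ j, K i j) * |z i| := by rw [Finset.sum_mul]
    nlinarith [hrow i]
  have hinj : Function.Injective (1 - K).mulVec := by
    intro x y h
    have := hker (x - y) (by rw [Matrix.mulVec_sub, h, sub_self])
    exact sub_eq_zero.mp this
  have hU : IsUnit (1 - K) := Matrix.mulVec_injective_iff_isUnit.mp hinj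
  refine ⟨hU, fun i j => ?_⟩
  set x : ι → ℝ := (1 - K)⁻¹.mulVec (Pi.single j 1) with hxdef
  have hx : (1 - K).mulVec x = Pi.single j 1 := by
    rw [hxdef, Matrix.mulVec_mulVec, Matrix.mul_nonsing_inv _ (Matrix.isUnit_iff_isUnit_det _ |>.mp hU), Matrix.one_mulVec]
  have hxnn : ∀ i, 0 ≤ x i := by
    by_contra hneg
    push_neg at hneg
    obtain ⟨i₀, -, hi₀⟩ := Finset.exists_min_image Finset.univ x ⟨Classical.arbitrary ι, Finset.mem_univ _⟩
    obtain ⟨i₁, hi₁⟩ := hneg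
    have hmin : x i₀ < 0 := lt_of_le_of_lt (hi₀ i₁ (Finset.mem_univ i₁)) hi₁
    have hxi : x i₀ = (K.mulVec x) i₀ + (Pi.single j 1 : ι → ℝ) i₀ := by
      have := congrFun hx i₀
      rw [Matrix.sub_mulVec, Matrix.one_mulVec] at this
      have h2 : x i₀ - K.mulVec x i₀ = (Pi.single j 1 : ι → ℝ) i₀ := this
      linarith
    have h3 : (∑ l, K i₀ l) * x i₀ ≤ (K.mulVec x) i₀ := by
      rw [Finset.sum_mul]
      refine Finset.sum_le_sum fun l _ => ?_
      exact mul_le_mul_of_nonneg_left (hi₀ l (Finset.mem_univ l)) (hK i₀ l)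
    have h4 : (0:ℝ) ≤ (Pi.single j 1 : ι → ℝ) i₀ := by
      rcases eq_or_ne i₀ j with h | h
      · subst h; simp
      · simp [Pi.single_eq_of_ne h]
    nlinarith [hrow i₀]
  have : x i = (1 - K)⁻¹ i j := by
    rw [hxdef]
    simp [Matrix.mulVec, dotProduct, Pi.single_apply, mul_ite]
  rw [← this]; exact hxnn i

lemma zmat_key [Nonempty ι] {W : Matrix ι ι ℝ}
    (hdiag : ∀ i, 0 < W i i)
    (hoff : ∀ i j, i ≠ j → W i j ≤ 0)
    (hrow : ∀ i, 0 ≤ ∑ j, W i j)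
    (hreach : ∀ i, ∃ k, Relation.ReflTransGen (fun a b => W a b < 0) i k ∧ 0 < ∑ j, W k j) :
    IsUnit W ∧ ∀ i j, 0 ≤ W⁻¹ i j := by
  set J : Matrix ι ι ℝ := Matrix.of fun i j => if i = j then 0 else -W i j / W i i with hJdef
  have hJapp : ∀ i j, J i j = if i = j then 0 else -W i j / W i i := fun i j => rfl
  have hJ0 : ∀ i j, 0 ≤ J i j := by
    intro i j
    rw [hJapp]
    split
    · exact le_refl 0
    · exact div_nonneg (neg_nonneg.mpr (hoff i j (by assumption))) (hdiag i).le
  have hJrowsum : ∀ i, ∑ j, J i j = 1 - (∑ j, W i j) / W i i := by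
    intro i
    have hne : W i i ≠ 0 := (hdiag i).ne'
    have h1 : ∀ j, J i j = (-W i j + if i = j then W i j else 0) / W i i := by
      intro j
      rcases eq_or_ne i j with h|h
      · subst h; simp [hJapp]
      · simp [hJapp, h]
    rw [Finset.sum_congr rfl (fun j _ => h1 j), ← Finset.sum_div,
      Finset.sum_add_distrib, Finset.sum_ite_eq, if_pos (Finset.mem_univ i)]
    have h2 : ∑ j, -W i j = -∑ j, W i j := by simp
    rw [h2]
    field_simp
    ring
  have hJle : ∀ i, ∑ j, J i j ≤ 1 := by
    intro i
    rw [hJrowsum]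
    have : 0 ≤ (∑ j, W i j) / W i i := div_nonneg (hrow i) (hdiag i).le
    linarith
  -- row sums of powers
  set r : ℕ → ι → ℝ := fun t i => ∑ j, (J ^ t) i j with hrdef
  have hpow0 : ∀ t i j, 0 ≤ (J ^ t) i j := by
    intro t
    induction t with
    | zero => intro i j; rw [pow_zero]; rcases eq_or_ne i j with h|h <;>
        simp [Matrix.one_apply, h]
    | succ t ih => intro i j; rw [pow_succ]; exact entry_mul_nonneg ih hJ0 i j
  have hr0 : ∀ t i, 0 ≤ r t i := fun t i =>
    Finset.sum_nonneg fun j _ => hpow0 t i j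
  have hrstep : ∀ t i, r (t+1) i = ∑ k, J i k * r t k := by
    intro t i
    show ∑ x, (J ^ (t+1)) i x = _
    simp only [pow_succ', Matrix.mul_apply, Finset.mul_sum]
    rw [Finset.sum_comm]
    simp [hrdef, Finset.mul_sum]
  have hrstep2 : ∀ t i, r (t+1) i = ∑ k, (J ^ t) i k * (∑ j, J k j) := by
    intro t i
    show ∑ x, (J ^ (t+1)) i x = _
    simp only [pow_succ, Matrix.mul_apply, Finset.mul_sum]
    rw [Finset.sum_comm]
  have hrle1 : ∀ t i, r t i ≤ 1 := by
    intro t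
    induction t with
    | zero => intro i; simp [hrdef, Matrix.one_apply]
    | succ t ih =>
      intro i
      rw [hrstep]
      calc ∑ k, J i k * r t k ≤ ∑ k, J i k * 1 := by
            refine Finset.sum_le_sum fun k _ => ?_
            exact mul_le_mul_of_nonneg_left (ih k) (hJ0 i k)
        _ = ∑ k, J i k := by simp
        _ ≤ 1 := hJle i
  have hrmono : ∀ t i, r (t+1) i ≤ r t i := by
    intro t i
    rw [hrstep2]
    calc ∑ k, (J ^ t) i k * (∑ j, J k j) ≤ ∑ k, (J ^ t) i k * 1 := by
          refine Finset.sum_le_sum fun k _ => ?_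
          exact mul_le_mul_of_nonneg_left (hJle k) (hpow0 t i k)
      _ = r t i := by simp [hrdef]
  have hranti : ∀ s t, s ≤ t → ∀ i, r t i ≤ r s i := by
    intro s t hst i
    have : Antitone (fun t => r t i) := antitone_nat_of_succ_le (fun t => hrmono t i)
    exact this hst
  have hprop : ∀ t i c, 0 < J i c → r t c < 1 → r (t+1) i < 1 := by
    intro t i c hJic hc
    rw [hrstep]
    have h1 : ∑ k, J i k * r t k < ∑ k, J i k := by
      refine Finset.sum_lt_sum (fun k _ => ?_) ⟨c, Finset.mem_univ c, ?_⟩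
      · nlinarith [hrle1 t k, hJ0 i k]
      · nlinarith
    exact lt_of_lt_of_le h1 (hJle i)
  have hstrict : ∀ i, ∃ t, r t i < 1 := by
    intro i
    obtain ⟨k, hpath, hk⟩ := hreach i
    have hbase : r 1 k < 1 := by
      rw [hrdef]
      simp only [pow_one]
      rw [hJrowsum]
      have : 0 < (∑ j, W k j) / W k k := div_pos hk (hdiag k)
      linarith
    clear hk
    induction hpath using Relation.ReflTransGen.head_induction_on with
    | refl => exact ⟨1, hbase⟩
    | head hab _ ih =>
      rename_i a c _
      obtain ⟨t, ht⟩ := ih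
      refine ⟨t + 1, hprop t a c ?_ ht⟩
      have hac : a ≠ c := by
        intro h; subst h; exact absurd hab (not_lt.mpr (hdiag a).le).elim
      rw [hJapp, if_neg hac]
      exact div_pos (neg_pos.mpr hab) (hdiag a)
  choose tf htf using hstrict
  set T : ℕ := Finset.univ.sup tf with hTdef
  have hT : ∀ i, r T i < 1 := fun i =>
    lt_of_le_of_lt (hranti (tf i) T (Finset.le_sup (Finset.mem_univ i)) i) (htf i)
  set K : Matrix ι ι ℝ := J ^ T with hKdef
  obtain ⟨hKU, hKinv⟩ := oneSubK_key (hpow0 T) hT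
  set S : Matrix ι ι ℝ := ∑ k ∈ Finset.range T, J ^ k with hSdef
  have hS0 : ∀ i j, 0 ≤ S i j := by
    intro i j
    rw [hSdef, Matrix.sum_apply]
    exact Finset.sum_nonneg fun k _ => hpow0 k i j
  have hSK : S * (1 - J) = 1 - K := by
    have h := geom_sum_mul J T
    calc S * (1 - J) = -(S * (J - 1)) := by rw [← neg_sub J 1, mul_neg]
      _ = -(K - 1) := by rw [hSdef, h, hKdef]
      _ = 1 - K := neg_sub _ _
  have h1JU : IsUnit (1 - J) := by
    rw [Matrix.isUnit_iff_isUnit_det]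
    have : IsUnit (S.det * (1 - J).det) := by
      rw [← Matrix.det_mul, hSK, ← Matrix.isUnit_iff_isUnit_det]
      exact hKU
    exact isUnit_of_mul_isUnit_right this
  have hinv1J : (1 - J)⁻¹ = (1 - K)⁻¹ * S := by
    apply Matrix.inv_eq_left_inv
    rw [Matrix.mul_assoc, hSK, Matrix.nonsing_inv_mul _ (Matrix.isUnit_iff_isUnit_det _ |>.mp hKU)]
  have h1Jinv0 : ∀ i j, 0 ≤ (1 - J)⁻¹ i j := by
    rw [hinv1J]
    exact entry_mul_nonneg hKinv hS0
  set D : Matrix ι ι ℝ := Matrix.diagonal (fun i => W i i) with hDdef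
  have hDU : IsUnit D := by
    rw [Matrix.isUnit_iff_isUnit_det, hDdef, Matrix.det_diagonal]
    exact isUnit_iff_ne_zero.mpr (Finset.prod_ne_zero_iff.mpr fun i _ => (hdiag i).ne')
  have hWDJ : W = D * (1 - J) := by
    ext i j
    rw [hDdef, Matrix.diagonal_mul]
    rcases eq_or_ne i j with h|h
    · subst h; simp [Matrix.one_apply, hJapp]
    · simp only [Matrix.sub_apply, Matrix.one_apply, if_neg h, hJapp]
      field_simp
      simp only [zero_sub, neg_neg]; rw [mul_comm]; exact (div_mul_cancel₀ _ (hdiag i).ne').symm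
  have hWU : IsUnit W := by rw [hWDJ]; exact hDU.mul h1JU
  refine ⟨hWU, fun i j => ?_⟩
  have hWinv : W⁻¹ = (1 - J)⁻¹ * D⁻¹ := by rw [hWDJ, Matrix.mul_inv_rev]
  have hDinv : D⁻¹ = Matrix.diagonal (fun i => (W i i)⁻¹) := by
    apply Matrix.inv_eq_right_inv
    rw [hDdef, Matrix.diagonal_mul_diagonal]
    ext a b
    rcases eq_or_ne a b with h|h
    · subst h; simp [mul_inv_cancel₀ (hdiag a).ne']
    · simp [Matrix.diagonal_apply_ne _ h, Matrix.one_apply_ne h]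
  rw [hWinv, hDinv, Matrix.mul_diagonal]
  exact mul_nonneg (h1Jinv0 i j) (inv_nonneg.mpr (hdiag j).le)

end CoreZ

section Aux

variable {n m : ℕ}

/-- entry of the mixing matrix `T(p) = diag p + (1 - diag p)(1 - F*)`. -/
lemma Tentry (N : Fin m → ℝ) (piv : Fin m → Fin n → ℝ) (p : Fin m × Fin n → ℝ)
    (q q' : Fin m × Fin n) :
    (Matrix.diagonal p + (1 - Matrix.diagonal p) * (1 - Fstar N piv)) q q'
      = (if q = q' then 1 else 0) - (1 - p q) * Fstar N piv q q' := by
  have h1 : (1 : Matrix (Fin m × Fin n) (Fin m × Fin n) ℝ) - Matrix.diagonal p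
      = Matrix.diagonal (fun q => 1 - p q) := by
    rw [← Matrix.diagonal_one, ← Matrix.diagonal_sub]
  rw [Matrix.add_apply, h1, Matrix.diagonal_mul, Matrix.sub_apply, Matrix.one_apply,
    Matrix.diagonal_apply]
  rcases eq_or_ne q q' with h | h
  · subst h; norm_num; ring
  · simp only [if_neg h]; ring

end Aux

open Matrix Finset in
lemma nu_pos {n : ℕ} (hn : 2 ≤ n) (Qa : Matrix (Fin n) (Fin n) ℝ)
    (hQoff : ∀ i j : Fin n, i ≠ j → 0 ≤ Qa i j)
    (hQdiag : ∀ i : Fin n, Qa i i = -∑ j ∈ Finset.univ \ {i}, Qa i j)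
    (hQirr : ∀ i j : Fin n, Relation.ReflTransGen (fun a b => 0 < Qa a b) i j)
    (i : Fin n) : 0 < ∑ j ∈ Finset.univ \ {i}, Qa i j := by
  have hterm : ∀ j ∈ Finset.univ \ {i}, 0 ≤ Qa i j := by
    intro j hj
    rw [Finset.mem_sdiff, Finset.mem_singleton] at hj
    exact hQoff i j (fun h => hj.2 (h ▸ rfl))
  have hnontriv : ∃ j : Fin n, j ≠ i := by
    refine ⟨if i = ⟨0, by omega⟩ then ⟨1, by omega⟩ else ⟨0, by omega⟩, ?_⟩
    split
    · rename_i h; rw [h]; simp [Fin.ext_iff]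
    · rename_i h; exact fun hc => h (hc ▸ rfl)
  obtain ⟨j₀, hj₀⟩ := hnontriv
  have hpath := hQirr i j₀
  rcases Relation.ReflTransGen.cases_head hpath with h | ⟨c, hc, -⟩
  · exact absurd h.symm hj₀
  · have hci : c ≠ i := by
      intro h
      subst h
      have h1 : 0 ≤ ∑ j ∈ Finset.univ \ {c}, Qa c j := Finset.sum_nonneg hterm
      have h2 := hQdiag c
      linarith
    refine lt_of_lt_of_le hc (Finset.single_le_sum hterm ?_)
    rw [Finset.mem_sdiff, Finset.mem_singleton]
    exact ⟨Finset.mem_univ c, hci⟩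

open Matrix Finset in
lemma Fstar_nonneg {n m : ℕ} (N : Fin m → ℝ) (piv : Fin m → Fin n → ℝ)
    (hN : ∀ α, 0 < N α) (hpiv : ∀ α i, 0 < piv α i) (q q' : Fin m × Fin n) :
    0 ≤ Fstar N piv q q' := by
  show (0:ℝ) ≤ if q.2 = q'.2 then N q'.1 * piv q'.1 q.2 / ∑ τ, N τ * piv τ q.2 else 0
  split
  · exact div_nonneg (mul_nonneg (hN _).le (hpiv _ _).le)
      (Finset.sum_nonneg fun τ _ => mul_nonneg (hN τ).le (hpiv τ _).le)
  · exact le_refl 0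

open Matrix Finset in
lemma Fstar_row {n m : ℕ} (N : Fin m → ℝ) (piv : Fin m → Fin n → ℝ)
    (hN : ∀ α, 0 < N α) (hpiv : ∀ α i, 0 < piv α i) (q : Fin m × Fin n) :
    ∑ q', Fstar N piv q q' = 1 := by
  have : Nonempty (Fin m) := ⟨q.1⟩
  have hS : 0 < ∑ τ, N τ * piv τ q.2 :=
    Finset.sum_pos (fun τ _ => mul_pos (hN τ) (hpiv τ _)) Finset.univ_nonempty
  rw [Fintype.sum_prod_type]
  have h1 : ∀ σ : Fin m, ∑ j : Fin n, Fstar N piv q (σ, j)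
      = N σ * piv σ q.2 / ∑ τ, N τ * piv τ q.2 := by
    intro σ
    have h2 : ∀ j : Fin n, Fstar N piv q (σ, j)
        = if q.2 = j then N σ * piv σ q.2 / ∑ τ, N τ * piv τ q.2 else 0 := fun j => rfl
    rw [Finset.sum_congr rfl fun j _ => h2 j, Finset.sum_ite_eq, if_pos (Finset.mem_univ _)]
  rw [Finset.sum_congr rfl fun σ _ => h1 σ, ← Finset.sum_div, div_self hS.ne']

open Matrix Finset in
lemma Fstar_le_one {n m : ℕ} (N : Fin m → ℝ) (piv : Fin m → Fin n → ℝ)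
    (hN : ∀ α, 0 < N α) (hpiv : ∀ α i, 0 < piv α i) (q q' : Fin m × Fin n) :
    Fstar N piv q q' ≤ 1 := by
  have h := Fstar_row N piv hN hpiv q
  have h2 : ∀ r, 0 ≤ Fstar N piv q r := Fstar_nonneg N piv hN hpiv q
  calc Fstar N piv q q' ≤ ∑ r, Fstar N piv q r :=
        Finset.single_le_sum (fun r _ => h2 r) (Finset.mem_univ q')
    _ = 1 := h

open Matrix Finset in
lemma Lstar_row {n m : ℕ} (Q : Fin m → Matrix (Fin n) (Fin n) ℝ)
    (piv : Fin m → Fin n → ℝ) (hpivpos : ∀ α i, 0 < piv α i)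
    (hQdiag : ∀ (α : Fin m) (i : Fin n), Q α i i = -∑ j ∈ Finset.univ \ {i}, Q α i j)
    (hpiveig : ∀ (α : Fin m) (i : Fin n), ∑ j, Q α j i * piv α j = 0)
    (q : Fin m × Fin n) : ∑ q', Lstar Q piv q q' = 0 := by
  obtain ⟨α, i⟩ := q
  rw [Fintype.sum_prod_type]
  have h1 : ∀ σ : Fin m, σ ≠ α → ∑ j : Fin n, Lstar Q piv (α, i) (σ, j) = 0 := by
    intro σ hσ
    refine Finset.sum_eq_zero fun j _ => ?_
    show (if α = σ then _ else (0:ℝ)) = 0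
    rw [if_neg (fun h => hσ h.symm)]
  have key : ∑ j ∈ Finset.univ \ {i}, Q α j i * piv α j
      = (∑ k ∈ Finset.univ \ {i}, Q α i k) * piv α i := by
    have h5 := hpiveig α i
    rw [Finset.sum_eq_sum_sdiff_singleton_add (Finset.mem_univ i)
      (fun j => Q α j i * piv α j), hQdiag α i] at h5
    linarith
  have h2 : ∑ j : Fin n, Lstar Q piv (α, i) (α, j) = 0 := by
    have h3 : ∀ j : Fin n, Lstar Q piv (α, i) (α, j)
        = if i = j then ∑ k ∈ Finset.univ \ {i}, Q α i k
          else -(Q α j i * piv α j) / piv α i := by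
      intro j
      show (if α = α then _ else _) = _
      rw [if_pos rfl]
      rcases eq_or_ne i j with h | h
      · subst h; simp
      · simp only [if_neg h]
        ring
    rw [Finset.sum_congr rfl fun j _ => h3 j,
      Finset.sum_eq_sum_sdiff_singleton_add (Finset.mem_univ i), if_pos rfl]
    have h4 : ∑ j ∈ Finset.univ \ {i}, (if i = j then ∑ k ∈ Finset.univ \ {i}, Q α i k
        else -(Q α j i * piv α j) / piv α i)
        = ∑ j ∈ Finset.univ \ {i}, -(Q α j i * piv α j) / piv α i := by
      refine Finset.sum_congr rfl fun j hj => ?_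
      rw [Finset.mem_sdiff, Finset.mem_singleton] at hj
      rw [if_neg (fun h => hj.2 h.symm)]
    rw [h4]
    have h6 : ∑ j ∈ Finset.univ \ {i}, -(Q α j i * piv α j) / piv α i
        = -(∑ j ∈ Finset.univ \ {i}, Q α j i * piv α j) / piv α i := by
      rw [← Finset.sum_div, Finset.sum_neg_distrib, neg_div]
    rw [h6, key]
    field_simp [(hpivpos α i).ne']
    ring
  rw [Finset.sum_eq_sum_sdiff_singleton_add (Finset.mem_univ α)
    (fun σ => ∑ j : Fin n, Lstar Q piv (α, i) (σ, j)), h2, add_zero]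
  refine Finset.sum_eq_zero fun σ hσ => ?_
  rw [Finset.mem_sdiff, Finset.mem_singleton] at hσ
  exact h1 σ hσ.2

open Matrix Finset in
lemma Wmat_key {n m : ℕ} (hn : 2 ≤ n) (hm : 1 ≤ m)
    (Q : Fin m → Matrix (Fin n) (Fin n) ℝ)
    (hQoff : ∀ (α : Fin m) (i j : Fin n), i ≠ j → 0 ≤ Q α i j)
    (hQdiag : ∀ (α : Fin m) (i : Fin n), Q α i i = -∑ j ∈ Finset.univ \ {i}, Q α i j)
    (hQirr : ∀ (α : Fin m) (i j : Fin n),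
      Relation.ReflTransGen (fun a b => 0 < Q α a b) i j)
    (piv : Fin m → Fin n → ℝ) (hpivpos : ∀ α i, 0 < piv α i)
    (hpiveig : ∀ (α : Fin m) (i : Fin n), ∑ j, Q α j i * piv α j = 0)
    (N : Fin m → ℝ) (hN : ∀ α, 0 < N α)
    (δ : Fin m → Fin n → ℝ) (hδ : ∀ α i, 0 ≤ δ α i) (hδpos : ∀ α, ∃ k, 0 < δ α k)
    (b : Fin m → Fin n → ℝ) (hb : ∀ α i, 0 ≤ b α i)
    (p : Fin m × Fin n → ℝ) (hp0 : ∀ q, 0 ≤ p q) (hp1 : ∀ q, p q ≤ 1) :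
    IsUnit (Lstar Q piv + pairDiag δ + pairDiag b *
        (Matrix.diagonal p + (1 - Matrix.diagonal p) * (1 - Fstar N piv))) ∧
    (∀ q q', 0 ≤ (Lstar Q piv + pairDiag δ + pairDiag b *
        (Matrix.diagonal p + (1 - Matrix.diagonal p) * (1 - Fstar N piv)))⁻¹ q q') ∧
    (∀ q, ∑ q', (Lstar Q piv + pairDiag δ + pairDiag b *
        (Matrix.diagonal p + (1 - Matrix.diagonal p) * (1 - Fstar N piv))) q q'
      = δ q.1 q.2 + b q.1 q.2 * p q) := by
  have hNe : Nonempty (Fin m × Fin n) := ⟨(⟨0, hm⟩, ⟨0, by omega⟩)⟩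
  set F := Fstar N piv with hF
  set W := Lstar Q piv + pairDiag δ + pairDiag b *
      (Matrix.diagonal p + (1 - Matrix.diagonal p) * (1 - F)) with hW
  -- entry formula
  have hWapp : ∀ q q', W q q' = Lstar Q piv q q' + (if q = q' then δ q.1 q.2 else 0)
      + b q.1 q.2 * ((if q = q' then 1 else 0) - (1 - p q) * F q q') := by
    intro q q'
    have h1 : pairDiag δ q q' = if q = q' then δ q.1 q.2 else 0 :=
      Matrix.diagonal_apply (fun q : Fin m × Fin n => δ q.1 q.2) q q'
    have h2 : (pairDiag b * (Matrix.diagonal p + (1 - Matrix.diagonal p) * (1 - F))) q q'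
        = b q.1 q.2 * ((if q = q' then 1 else 0) - (1 - p q) * F q q') := by
      rw [show pairDiag b = Matrix.diagonal (fun q : Fin m × Fin n => b q.1 q.2) from rfl,
        Matrix.diagonal_mul, hF, Tentry]
    rw [hW, Matrix.add_apply, Matrix.add_apply, h1, h2]
  -- ν positivity
  have hnu : ∀ (α : Fin m) (i : Fin n), 0 < ∑ j ∈ Finset.univ \ {i}, Q α i j :=
    fun α i => nu_pos hn (Q α) (hQoff α) (hQdiag α) (hQirr α) i
  have hLdiag : ∀ q : Fin m × Fin n, Lstar Q piv q q = ∑ j ∈ Finset.univ \ {q.2}, Q q.1 q.2 j := by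
    intro q
    show (if q.1 = q.1 then _ else _) = _
    rw [if_pos rfl, if_pos rfl]
  have hLoff : ∀ q q' : Fin m × Fin n, q ≠ q' → Lstar Q piv q q' ≤ 0 := by
    intro q q' hne
    show (if q.1 = q'.1 then _ else (0:ℝ)) ≤ 0
    split
    · rename_i h1
      have h2 : q.2 ≠ q'.2 := by
        intro h2; exact hne (Prod.ext h1 h2)
      rw [if_neg h2]
      have : 0 ≤ Q q.1 q'.2 q.2 * piv q.1 q'.2 / piv q.1 q.2 :=
        div_nonneg (mul_nonneg (hQoff q.1 q'.2 q.2 (fun h => h2 h.symm))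
          (hpivpos _ _).le) (hpivpos _ _).le
      linarith
    · exact le_refl 0
  have hF0 : ∀ q q', 0 ≤ F q q' := Fstar_nonneg N piv hN hpivpos
  have hF1 : ∀ q q', F q q' ≤ 1 := Fstar_le_one N piv hN hpivpos
  -- diagonal positivity
  have hdiag : ∀ q, 0 < W q q := by
    intro q
    rw [hWapp, hLdiag, if_pos rfl, if_pos rfl]
    have h5 : (1 - p q) * F q q ≤ 1 := by nlinarith [hF0 q q, hF1 q q, hp0 q, hp1 q]
    have h6 : 0 ≤ b q.1 q.2 * (1 - (1 - p q) * F q q) :=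
      mul_nonneg (hb _ _) (by linarith)
    nlinarith [hnu q.1 q.2, hδ q.1 q.2]
  -- off-diagonal nonpositivity
  have hoff : ∀ q q', q ≠ q' → W q q' ≤ 0 := by
    intro q q' hne
    rw [hWapp, if_neg hne, if_neg hne]
    have h1 := hLoff q q' hne
    have h2 : 0 ≤ b q.1 q.2 * ((1 - p q) * F q q') :=
      mul_nonneg (hb _ _) (mul_nonneg (by linarith [hp1 q]) (hF0 q q'))
    nlinarith
  -- row sums
  have hWrow : ∀ q, ∑ q', W q q' = δ q.1 q.2 + b q.1 q.2 * p q := by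
    intro q
    rw [Finset.sum_congr rfl fun q' (_ : q' ∈ Finset.univ) => hWapp q q']
    rw [Finset.sum_add_distrib, Finset.sum_add_distrib]
    rw [Lstar_row Q piv hpivpos hQdiag hpiveig q]
    rw [Finset.sum_ite_eq, if_pos (Finset.mem_univ q)]
    rw [← Finset.mul_sum]
    have h3 : ∑ q', ((if q = q' then (1:ℝ) else 0) - (1 - p q) * F q q') = p q := by
      rw [Finset.sum_sub_distrib, Finset.sum_ite_eq, if_pos (Finset.mem_univ q),
        ← Finset.mul_sum, Fstar_row N piv hN hpivpos q]
      ring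
    rw [h3]
    ring
  -- reachability
  have hQdiagle : ∀ (α : Fin m) (a : Fin n), Q α a a ≤ 0 := by
    intro α a
    rw [hQdiag α a]
    have : 0 ≤ ∑ j ∈ Finset.univ \ {a}, Q α a j := by
      refine Finset.sum_nonneg fun j hj => ?_
      rw [Finset.mem_sdiff, Finset.mem_singleton] at hj
      exact hQoff α a j (fun h => hj.2 (h ▸ rfl))
    linarith
  have hstep : ∀ (αl : Fin m) (a c : Fin n), 0 < Q αl c a → W (αl, a) (αl, c) < 0 := by
    intro αl a c hQ
    have hac : a ≠ c := by
      intro h; subst h; exact absurd hQ (not_lt.mpr (hQdiagle αl a))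
    have hne : (αl, a) ≠ (αl, c) := fun h => hac (congrArg Prod.snd h)
    rw [hWapp, if_neg hne, if_neg hne]
    have hL : Lstar Q piv (αl, a) (αl, c) = -(Q αl c a * piv αl c / piv αl a) := by
      show (if αl = αl then _ else _) = _
      rw [if_pos rfl, if_neg hac]
    have hFz : F (αl, a) (αl, c) = 0 := by
      show (if a = c then _ else (0:ℝ)) = 0
      rw [if_neg hac]
    rw [hL, hFz]
    have : 0 < Q αl c a * piv αl c / piv αl a :=
      div_pos (mul_pos hQ (hpivpos _ _)) (hpivpos _ _)
    nlinarith
  have hreach : ∀ q : Fin m × Fin n, ∃ k, Relation.ReflTransGen (fun a b => W a b < 0) q k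
      ∧ 0 < ∑ q', W k q' := by
    intro q
    obtain ⟨k₀, hk₀⟩ := hδpos q.1
    refine ⟨(q.1, k₀), ?_, ?_⟩
    · have h2 : Relation.ReflTransGen (Function.swap fun a b => 0 < Q q.1 a b) q.2 k₀ :=
        Relation.reflTransGen_swap.mpr (hQirr q.1 k₀ q.2)
      have h3 := Relation.ReflTransGen.lift
        (p := fun x y => W x y < 0) (fun x => (q.1, x))
        (fun a b hab => hstep q.1 a b hab) _ _ h2
      simpa using h3
    · rw [hWrow (q.1, k₀)]
      have h7 : 0 ≤ b q.1 k₀ * p (q.1, k₀) := mul_nonneg (hb _ _) (hp0 _)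
      show 0 < δ q.1 k₀ + b q.1 k₀ * p (q.1, k₀)
      linarith
  have hrownn : ∀ q, 0 ≤ ∑ q', W q q' := by
    intro q
    rw [hWrow q]
    exact add_nonneg (hδ _ _) (mul_nonneg (hb _ _) (hp0 q))
  obtain ⟨hU, hinv⟩ := zmat_key hdiag hoff hrownn hreach
  exact ⟨hU, hinv, hWrow⟩


/-- For all `p₁, p₂` with `0 ≤ p₁ ≤ p₂ ≤ 1` entrywise, the matrices
`I + A(diag(pᵢ) + (I − diag(pᵢ))M)` are invertible and `H(p₁) ≤ H(p₂)` entrywise; the map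
`H` is monotone on `[0,1]^{nm}`, where `A = (L* + D)⁻¹ B` and `M = I − F*`. -/
theorem Hmap_monotone
    {n m : ℕ} (hn : 2 ≤ n) (hm : 1 ≤ m)
    (Q : Fin m → Matrix (Fin n) (Fin n) ℝ)
    (hQoff : ∀ (α : Fin m) (i j : Fin n), i ≠ j → 0 ≤ Q α i j)
    (hQdiag : ∀ (α : Fin m) (i : Fin n), Q α i i = -∑ j ∈ Finset.univ \ {i}, Q α i j)
    (hQirr : ∀ (α : Fin m) (i j : Fin n),
      Relation.ReflTransGen (fun a b => 0 < Q α a b) i j)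
    (piv : Fin m → Fin n → ℝ) (hpivpos : ∀ α i, 0 < piv α i)
    (hpiveig : ∀ (α : Fin m) (i : Fin n), ∑ j, Q α j i * piv α j = 0)
    (hpivsum : ∀ α, ∑ i, piv α i = 1)
    (N : Fin m → ℝ) (hN : ∀ α, 0 < N α)
    (β δ : Fin m → Fin n → ℝ)
    (hβ : ∀ α i, 0 < β α i) (hδ : ∀ α i, 0 ≤ δ α i)
    (hδpos : ∀ α, ∃ k, 0 < δ α k)
    (p₁ p₂ : Fin m × Fin n → ℝ)
    (hp₁0 : ∀ q, 0 ≤ p₁ q) (hp₁₂ : ∀ q, p₁ q ≤ p₂ q) (hp₂1 : ∀ q, p₂ q ≤ 1) :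
    IsUnit (1 + Amat Q piv β δ * (Matrix.diagonal p₁
        + (1 - Matrix.diagonal p₁) * (1 - Fstar N piv))) ∧
      IsUnit (1 + Amat Q piv β δ * (Matrix.diagonal p₂
        + (1 - Matrix.diagonal p₂) * (1 - Fstar N piv))) ∧
      (∀ q, Hmap (Amat Q piv β δ) (1 - Fstar N piv) p₁ q
        ≤ Hmap (Amat Q piv β δ) (1 - Fstar N piv) p₂ q) := by
  have hp₂0 : ∀ q, 0 ≤ p₂ q := fun q => le_trans (hp₁0 q) (hp₁₂ q)
  have hp₁1 : ∀ q, p₁ q ≤ 1 := fun q => le_trans (hp₁₂ q) (hp₂1 q)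
  have hβ' : ∀ α i, 0 ≤ β α i := fun α i => (hβ α i).le
  -- G facts
  obtain ⟨hGU', -, -⟩ := Wmat_key hn hm Q hQoff hQdiag hQirr piv hpivpos hpiveig N hN
    δ hδ hδpos (fun _ _ => 0) (fun _ _ => le_refl 0) p₁ hp₁0 hp₁1
  have hGsimp : Lstar Q piv + pairDiag δ + pairDiag (fun _ _ => (0:ℝ)) *
      (Matrix.diagonal p₁ + (1 - Matrix.diagonal p₁) * (1 - Fstar N piv))
      = Lstar Q piv + pairDiag δ := by
    have h0 : pairDiag (fun (_ : Fin m) (_ : Fin n) => (0:ℝ)) = 0 := Matrix.diagonal_zero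
    rw [h0, zero_mul, add_zero]
  rw [hGsimp] at hGU'
  set G : Matrix (Fin m × Fin n) (Fin m × Fin n) ℝ := Lstar Q piv + pairDiag δ with hGdef
  have hGU : IsUnit G := hGU'
  have hGdet : IsUnit G.det := (Matrix.isUnit_iff_isUnit_det G).mp hGU
  set T₁ := Matrix.diagonal p₁ + (1 - Matrix.diagonal p₁) * (1 - Fstar N piv) with hT₁
  set T₂ := Matrix.diagonal p₂ + (1 - Matrix.diagonal p₂) * (1 - Fstar N piv) with hT₂
  obtain ⟨hW₁U, hW₁inv, hW₁row⟩ := Wmat_key hn hm Q hQoff hQdiag hQirr piv hpivpos hpiveig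
    N hN δ hδ hδpos β hβ' p₁ hp₁0 hp₁1
  obtain ⟨hW₂U, hW₂inv, hW₂row⟩ := Wmat_key hn hm Q hQoff hQdiag hQirr piv hpivpos hpiveig
    N hN δ hδ hδpos β hβ' p₂ hp₂0 hp₂1
  set W₁ : Matrix (Fin m × Fin n) (Fin m × Fin n) ℝ := G + pairDiag β * T₁ with hW₁def
  set W₂ : Matrix (Fin m × Fin n) (Fin m × Fin n) ℝ := G + pairDiag β * T₂ with hW₂def
  have hW₁det : IsUnit W₁.det := (Matrix.isUnit_iff_isUnit_det W₁).mp hW₁U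
  have hW₂det : IsUnit W₂.det := (Matrix.isUnit_iff_isUnit_det W₂).mp hW₂U
  have hA : Amat Q piv β δ = G⁻¹ * pairDiag β := rfl
  -- key factorization
  have hkey₁ : 1 + Amat Q piv β δ * T₁ = G⁻¹ * W₁ := by
    rw [hA, hW₁def, mul_add G⁻¹ G (pairDiag β * T₁), Matrix.nonsing_inv_mul G hGdet,
      ← Matrix.mul_assoc]
  have hkey₂ : 1 + Amat Q piv β δ * T₂ = G⁻¹ * W₂ := by
    rw [hA, hW₂def, mul_add G⁻¹ G (pairDiag β * T₂), Matrix.nonsing_inv_mul G hGdet,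
      ← Matrix.mul_assoc]
  have hUnit : ∀ (W : Matrix (Fin m × Fin n) (Fin m × Fin n) ℝ), IsUnit W.det →
      IsUnit (G⁻¹ * W) := by
    intro W hWdet
    refine ⟨⟨G⁻¹ * W, W⁻¹ * G, ?_, ?_⟩, rfl⟩
    · rw [Matrix.mul_assoc, ← Matrix.mul_assoc W, Matrix.mul_nonsing_inv W hWdet,
        Matrix.one_mul, Matrix.nonsing_inv_mul G hGdet]
    · rw [Matrix.mul_assoc, ← Matrix.mul_assoc G, Matrix.mul_nonsing_inv G hGdet,
        Matrix.one_mul, Matrix.nonsing_inv_mul W hWdet]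
  refine ⟨hkey₁ ▸ hUnit W₁ hW₁det, hkey₂ ▸ hUnit W₂ hW₂det, ?_⟩
  -- Hmap identities
  have hHmap : ∀ (W : Matrix (Fin m × Fin n) (Fin m × Fin n) ℝ)
      (p : Fin m × Fin n → ℝ), IsUnit W.det →
      (1 + Amat Q piv β δ * (Matrix.diagonal p
        + (1 - Matrix.diagonal p) * (1 - Fstar N piv)) = G⁻¹ * W) →
      Hmap (Amat Q piv β δ) (1 - Fstar N piv) p
        = W⁻¹.mulVec (fun q => β q.1 q.2 * p q) := by
    intro W p hWdet hfact
    show ((1 + Amat Q piv β δ * (Matrix.diagonal p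
        + (1 - Matrix.diagonal p) * (1 - Fstar N piv)))⁻¹).mulVec
        ((Amat Q piv β δ).mulVec p) = _
    rw [hfact, Matrix.mul_inv_rev, Matrix.nonsing_inv_nonsing_inv G hGdet, hA,
      Matrix.mulVec_mulVec]
    have hassoc : W⁻¹ * G * (G⁻¹ * pairDiag β) = W⁻¹ * pairDiag β := by
      rw [Matrix.mul_assoc (W⁻¹) G, ← Matrix.mul_assoc G, Matrix.mul_nonsing_inv G hGdet,
        Matrix.one_mul]
    rw [hassoc, ← Matrix.mulVec_mulVec]
    have hd : pairDiag β *ᵥ p = fun q => β q.1 q.2 * p q := by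
      funext q
      exact Matrix.mulVec_diagonal (fun q : Fin m × Fin n => β q.1 q.2) p q
    rw [hd]
  set Bp₁ : Fin m × Fin n → ℝ := fun q => β q.1 q.2 * p₁ q with hBp₁
  set Bp₂ : Fin m × Fin n → ℝ := fun q => β q.1 q.2 * p₂ q with hBp₂
  set x₁ := W₁⁻¹.mulVec Bp₁ with hx₁def
  set x₂ := W₂⁻¹.mulVec Bp₂ with hx₂def
  have hH₁ : Hmap (Amat Q piv β δ) (1 - Fstar N piv) p₁ = x₁ := hHmap W₁ p₁ hW₁det hkey₁
  have hH₂ : Hmap (Amat Q piv β δ) (1 - Fstar N piv) p₂ = x₂ := hHmap W₂ p₂ hW₂det hkey₂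
  -- basic positivity facts
  have hmulVec_nonneg : ∀ (M : Matrix (Fin m × Fin n) (Fin m × Fin n) ℝ)
      (v : Fin m × Fin n → ℝ), (∀ a c, 0 ≤ M a c) → (∀ c, 0 ≤ v c) →
      ∀ a, 0 ≤ M.mulVec v a := by
    intro M v hM hv a
    exact Finset.sum_nonneg fun c _ => mul_nonneg (hM a c) (hv c)
  have hx₁0 : ∀ q, 0 ≤ x₁ q :=
    hmulVec_nonneg _ _ hW₁inv (fun c => mul_nonneg (hβ' _ _) (hp₁0 c))
  -- W₁ ∙ x₁ = Bp₁
  have hcancel : ∀ (W : Matrix (Fin m × Fin n) (Fin m × Fin n) ℝ), IsUnit W.det →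
      ∀ v, W.mulVec (W⁻¹.mulVec v) = v := by
    intro W hWdet v
    rw [Matrix.mulVec_mulVec, Matrix.mul_nonsing_inv W hWdet, Matrix.one_mulVec]
  have hcancel' : ∀ (W : Matrix (Fin m × Fin n) (Fin m × Fin n) ℝ), IsUnit W.det →
      ∀ v, W⁻¹.mulVec (W.mulVec v) = v := by
    intro W hWdet v
    rw [Matrix.mulVec_mulVec, Matrix.nonsing_inv_mul W hWdet, Matrix.one_mulVec]
  have hW₁x₁ : W₁.mulVec x₁ = Bp₁ := hcancel W₁ hW₁det Bp₁
  -- x₁ ≤ 1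
  have hx₁1 : ∀ q, x₁ q ≤ 1 := by
    have hδvec : (fun q : Fin m × Fin n => δ q.1 q.2)
        = W₁.mulVec (fun _ => (1:ℝ)) - Bp₁ := by
      funext q
      have h1 : W₁.mulVec (fun _ => (1:ℝ)) q = ∑ q', W₁ q q' := by
        rw [show W₁.mulVec (fun _ => (1:ℝ)) q = ∑ q', W₁ q q' * 1 from rfl]
        simp
      simp only [Pi.sub_apply]
      rw [h1, hW₁row q, hBp₁]
      ring
    have h2 : (fun _ : Fin m × Fin n => (1:ℝ)) - x₁
        = W₁⁻¹.mulVec (fun q : Fin m × Fin n => δ q.1 q.2) := by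
      rw [hδvec, Matrix.mulVec_sub, hcancel' W₁ hW₁det, hx₁def]
    intro q
    have h3 : 0 ≤ ((fun _ : Fin m × Fin n => (1:ℝ)) - x₁) q := by
      rw [h2]
      exact hmulVec_nonneg _ _ hW₁inv (fun c => hδ _ _) q
    simpa using h3
  -- F ∙ x₁ ≤ 1
  have hFx : ∀ q, (Fstar N piv).mulVec x₁ q ≤ 1 := by
    intro q
    calc (Fstar N piv).mulVec x₁ q ≤ ∑ q', Fstar N piv q q' := by
          refine Finset.sum_le_sum fun q' _ => ?_
          calc Fstar N piv q q' * x₁ q'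
              ≤ Fstar N piv q q' * 1 :=
                mul_le_mul_of_nonneg_left (hx₁1 q') (Fstar_nonneg N piv hN hpivpos q q')
            _ = Fstar N piv q q' := mul_one _
      _ = 1 := Fstar_row N piv hN hpivpos q
  have hFx0 : ∀ q, 0 ≤ (Fstar N piv).mulVec x₁ q :=
    hmulVec_nonneg _ _ (Fstar_nonneg N piv hN hpivpos) hx₁0
  -- difference of W₂ and W₁
  have hDentry : ∀ q q', W₂ q q' = W₁ q q'
      + β q.1 q.2 * ((p₂ q - p₁ q) * Fstar N piv q q') := by
    intro q q'
    rw [hW₂def, hW₁def, Matrix.add_apply, Matrix.add_apply]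
    have e2 : (pairDiag β * T₂) q q' = β q.1 q.2 * T₂ q q' :=
      Matrix.diagonal_mul _ _ _ _
    have e1 : (pairDiag β * T₁) q q' = β q.1 q.2 * T₁ q q' :=
      Matrix.diagonal_mul _ _ _ _
    rw [e1, e2, hT₁, hT₂, Tentry, Tentry]
    ring
  have hsplit : ∀ q, W₂.mulVec x₁ q = Bp₁ q
      + β q.1 q.2 * ((p₂ q - p₁ q) * ((Fstar N piv).mulVec x₁ q)) := by
    intro q
    have h4 : W₂.mulVec x₁ q = ∑ q', (W₁ q q'
        + β q.1 q.2 * ((p₂ q - p₁ q) * Fstar N piv q q')) * x₁ q' :=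
      Finset.sum_congr rfl fun q' _ => by rw [← hDentry q q']
    rw [h4]
    have h5 : ∀ q', (W₁ q q' + β q.1 q.2 * ((p₂ q - p₁ q) * Fstar N piv q q')) * x₁ q'
        = W₁ q q' * x₁ q' + β q.1 q.2 * ((p₂ q - p₁ q) * (Fstar N piv q q' * x₁ q')) := by
      intro q'; ring
    rw [Finset.sum_congr rfl fun q' _ => h5 q', Finset.sum_add_distrib, ← Finset.mul_sum,
      ← Finset.mul_sum]
    have h6 : ∑ q', W₁ q q' * x₁ q' = Bp₁ q := congrFun hW₁x₁ q
    rw [h6]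
    rfl
  -- the comparison vector
  have hv₂ : ∀ q, 0 ≤ Bp₂ q - W₂.mulVec x₁ q := by
    intro q
    rw [hsplit q, hBp₂, hBp₁]
    have h7 : 0 ≤ β q.1 q.2 * ((p₂ q - p₁ q) * (1 - (Fstar N piv).mulVec x₁ q)) :=
      mul_nonneg (hβ' _ _) (mul_nonneg (by linarith [hp₁₂ q]) (by linarith [hFx q]))
    show 0 ≤ β q.1 q.2 * p₂ q - (β q.1 q.2 * p₁ q
      + β q.1 q.2 * ((p₂ q - p₁ q) * (Fstar N piv).mulVec x₁ q))
    nlinarith [h7]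
  have hdiff : x₂ - x₁ = W₂⁻¹.mulVec (Bp₂ - W₂.mulVec x₁) := by
    rw [Matrix.mulVec_sub, hcancel' W₂ hW₂det, hx₂def]
  intro q
  rw [hH₁, hH₂]
  have h8 : 0 ≤ (x₂ - x₁) q := by
    rw [hdiff]
    exact hmulVec_nonneg _ _ hW₂inv hv₂ q
  simp only [Pi.sub_apply] at h8
  linarith
end

section
/- For every p ∈ ℝ^{nm} with 0 ≤ p ≤ 1 entrywise, the matrix I + A(diag(p) + (I − diag(p))M) is invertible and H(p) ≤ 1 entrywise. -/
open Matrix BigOperators Finset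

lemma wcdd_nonneg {ι : Type*} [Fintype ι] [DecidableEq ι] [Nonempty ι]
    (K : Matrix ι ι ℝ) (b z : ι → ℝ)
    (hoff : ∀ i j, i ≠ j → K i j ≤ 0)
    (hrow : ∀ i, 0 ≤ ∑ j, K i j)
    (hb : ∀ i, 0 ≤ b i)
    (hchain : ∀ i, ∃ k, Relation.ReflTransGen (fun a c => a ≠ c ∧ K a c ≠ 0) i k
      ∧ 0 < ∑ j, K k j)
    (hz : K.mulVec z = b) :
    ∀ i, 0 ≤ z i := by
  obtain ⟨i₀, -, hmin⟩ := Finset.exists_min_image Finset.univ z Finset.univ_nonempty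
  simp only [Finset.mem_univ, forall_true_left, true_implies] at hmin
  intro i
  by_contra hneg
  push_neg at hneg
  have hm0 : z i₀ < 0 := lt_of_le_of_lt (hmin i) hneg
  set mval := z i₀ with hmval
  -- key local fact
  have key : ∀ a, z a = mval → (∑ j, K a j) = 0 ∧ ∀ j, K a j ≠ 0 → z j = mval := by
    intro a ha
    have hle : ∀ j ∈ Finset.univ, K a j * z j ≤ K a j * mval := by
      intro j _
      rcases eq_or_ne j a with rfl | hja
      · rw [ha]
      · exact mul_le_mul_of_nonpos_left (hmin j) (hoff a j (Ne.symm hja))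
    have hba : b a = ∑ j, K a j * z j := by
      rw [← hz]; simp [Matrix.mulVec, dotProduct]
    have hsum1 : ∑ j, K a j * z j ≤ (∑ j, K a j) * mval := by
      rw [Finset.sum_mul]; exact Finset.sum_le_sum hle
    have hsum2 : (∑ j, K a j) * mval ≤ 0 :=
      mul_nonpos_of_nonneg_of_nonpos (hrow a) hm0.le
    have hb0 : (0:ℝ) ≤ ∑ j, K a j * z j := hba ▸ hb a
    have heq1 : ∑ j, K a j * z j = (∑ j, K a j) * mval := le_antisymm hsum1 (by linarith)
    have heq2 : (∑ j, K a j) * mval = 0 := le_antisymm hsum2 (by linarith)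
    constructor
    · rcases mul_eq_zero.1 heq2 with h | h
      · exact h
      · exact absurd h hm0.ne
    · intro j hKj
      have := (Finset.sum_eq_sum_iff_of_le hle).1 (by rw [heq1, Finset.sum_mul]) j (Finset.mem_univ j)
      exact mul_left_cancel₀ hKj this
  obtain ⟨k, hpath, hk⟩ := hchain i₀
  have prop : ∀ {a c : ι}, Relation.ReflTransGen (fun a c => a ≠ c ∧ K a c ≠ 0) a c →
      z a = mval → z c = mval := by
    intro a c hac
    induction hac with
    | refl => exact id
    | tail _ h ih => exact fun ha => (key _ (ih ha)).2 _ h.2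
  have hzk : z k = mval := prop hpath rfl
  have := (key k hzk).1
  linarith

lemma wcdd_isUnit {ι : Type*} [Fintype ι] [DecidableEq ι] [Nonempty ι]
    (K : Matrix ι ι ℝ)
    (hoff : ∀ i j, i ≠ j → K i j ≤ 0)
    (hrow : ∀ i, 0 ≤ ∑ j, K i j)
    (hchain : ∀ i, ∃ k, Relation.ReflTransGen (fun a c => a ≠ c ∧ K a c ≠ 0) i k
      ∧ 0 < ∑ j, K k j) :
    IsUnit K := by
  rw [← Matrix.mulVec_injective_iff_isUnit]
  have h0 : ∀ z, K.mulVec z = 0 → z = 0 := by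
    intro z hKz
    have h1 := wcdd_nonneg K 0 z hoff hrow (fun _ => le_refl 0) hchain hKz
    have h2 := wcdd_nonneg K 0 (-z) hoff hrow (fun _ => le_refl 0) hchain
      (by rw [Matrix.mulVec_neg, hKz, neg_zero])
    funext i
    have := h2 i
    simp only [Pi.neg_apply, Pi.zero_apply] at this ⊢
    linarith [h1 i]
  intro x y hxy
  have : K.mulVec (x - y) = 0 := by
    rw [Matrix.mulVec_sub, hxy, sub_self]
  have := h0 _ this
  funext i
  have := congrFun this i
  simp only [Pi.sub_apply, Pi.zero_apply] at this
  linarith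

section Aux

variable {n m : ℕ}

lemma fstar_nonneg (N : Fin m → ℝ) (piv : Fin m → Fin n → ℝ)
    (hN : ∀ α, 0 < N α) (hpivpos : ∀ α i, 0 < piv α i) :
    ∀ q q' : Fin m × Fin n, 0 ≤ Fstar N piv q q' := by
  intro q q'
  simp only [Fstar, Matrix.of_apply]
  split
  · exact div_nonneg (mul_pos (hN q'.1) (hpivpos q'.1 q.2)).le
      (Finset.sum_nonneg fun τ _ => (mul_pos (hN τ) (hpivpos τ q.2)).le)
  · exact le_refl 0

lemma fstar_rowsum [NeZero m] (N : Fin m → ℝ) (piv : Fin m → Fin n → ℝ)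
    (hN : ∀ α, 0 < N α) (hpivpos : ∀ α i, 0 < piv α i) :
    ∀ q : Fin m × Fin n, ∑ q', Fstar N piv q q' = 1 := by
  intro q
  have hd : 0 < ∑ τ, N τ * piv τ q.2 :=
    Finset.sum_pos (fun τ _ => mul_pos (hN τ) (hpivpos τ q.2)) Finset.univ_nonempty
  rw [Fintype.sum_prod_type]
  simp only [Fstar, Matrix.of_apply]
  have : ∀ σ : Fin m, (∑ j : Fin n,
      if q.2 = j then N σ * piv σ q.2 / ∑ τ, N τ * piv τ q.2 else 0)
      = N σ * piv σ q.2 / ∑ τ, N τ * piv τ q.2 := by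
    intro σ
    rw [Finset.sum_ite_eq]
    simp
  rw [Finset.sum_congr rfl fun σ _ => this σ, ← Finset.sum_div, div_self hd.ne']

lemma lstar_rowsum (Q : Fin m → Matrix (Fin n) (Fin n) ℝ)
    (piv : Fin m → Fin n → ℝ) (hpivpos : ∀ α i, 0 < piv α i)
    (hQdiag : ∀ (α : Fin m) (i : Fin n), Q α i i = -∑ j ∈ Finset.univ \ {i}, Q α i j)
    (hpiveig : ∀ (α : Fin m) (i : Fin n), ∑ j, Q α j i * piv α j = 0) :
    ∀ q : Fin m × Fin n, ∑ q', Lstar Q piv q q' = 0 := by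
  rintro ⟨α, i⟩
  rw [Fintype.sum_prod_type]
  simp only [Lstar, Matrix.of_apply]
  have hcol : ∀ σ : Fin m, (∑ j : Fin n,
      if α = σ then (if i = j then ∑ l ∈ Finset.univ \ {i}, Q α i l
        else -(Q α j i * piv α j / piv α i)) else 0)
      = if α = σ then (∑ j : Fin n, (if i = j then ∑ l ∈ Finset.univ \ {i}, Q α i l
        else -(Q α j i * piv α j / piv α i))) else 0 := by
    intro σ; split <;> simp
  rw [Finset.sum_congr rfl fun σ _ => hcol σ, Finset.sum_ite_eq]
  simp only [Finset.mem_univ, if_true]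
  -- now a single-layer computation
  rw [← Finset.add_sum_erase _ _ (Finset.mem_univ i), if_pos rfl]
  have herase : ∑ j ∈ Finset.univ.erase i,
      (if i = j then ∑ l ∈ Finset.univ \ {i}, Q α i l
        else -(Q α j i * piv α j / piv α i))
      = -(∑ j ∈ Finset.univ.erase i, Q α j i * piv α j) / piv α i := by
    rw [Finset.sum_congr rfl fun j hj => if_neg (Ne.symm (Finset.mem_erase.1 hj).1)]
    simp only [← neg_div]
    rw [← Finset.sum_div, Finset.sum_neg_distrib]
  have heig := hpiveig α i
  rw [← Finset.add_sum_erase _ _ (Finset.mem_univ i)] at heig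
  have h2 : Q α i i = -∑ l ∈ Finset.univ.erase i, Q α i l := by
    rw [hQdiag]
    congr 1
    rw [Finset.sdiff_singleton_eq_erase]
  have hsum : ∑ j ∈ Finset.univ.erase i, Q α j i * piv α j
      = (∑ l ∈ Finset.univ \ {i}, Q α i l) * piv α i := by
    have h3 : -Q α i i * piv α i = (∑ l ∈ Finset.univ \ {i}, Q α i l) * piv α i := by
      rw [hQdiag]; ring
    linarith [heig]
  rw [herase, hsum]
  have hpne := (hpivpos α i).ne'
  field_simp
  ring

end Aux

/-- For every `p` with `0 ≤ p ≤ 1` entrywise, the matrix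
`I + A(diag(p) + (I − diag(p))M)` is invertible and `H(p) ≤ 1` entrywise, where
`A = (L* + D)⁻¹ B` and `M = I − F*`. -/
theorem Hmap_le_one
    {n m : ℕ} (hn : 2 ≤ n) (hm : 1 ≤ m)
    (Q : Fin m → Matrix (Fin n) (Fin n) ℝ)
    (hQoff : ∀ (α : Fin m) (i j : Fin n), i ≠ j → 0 ≤ Q α i j)
    (hQdiag : ∀ (α : Fin m) (i : Fin n), Q α i i = -∑ j ∈ Finset.univ \ {i}, Q α i j)
    (hQirr : ∀ (α : Fin m) (i j : Fin n),
      Relation.ReflTransGen (fun a b => 0 < Q α a b) i j)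
    (piv : Fin m → Fin n → ℝ) (hpivpos : ∀ α i, 0 < piv α i)
    (hpiveig : ∀ (α : Fin m) (i : Fin n), ∑ j, Q α j i * piv α j = 0)
    (hpivsum : ∀ α, ∑ i, piv α i = 1)
    (N : Fin m → ℝ) (hN : ∀ α, 0 < N α)
    (β δ : Fin m → Fin n → ℝ)
    (hβ : ∀ α i, 0 < β α i) (hδ : ∀ α i, 0 ≤ δ α i)
    (hδpos : ∀ α, ∃ k, 0 < δ α k)
    (p : Fin m × Fin n → ℝ) (hp0 : ∀ q, 0 ≤ p q) (hp1 : ∀ q, p q ≤ 1) :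
    IsUnit (1 + Amat Q piv β δ * (Matrix.diagonal p
        + (1 - Matrix.diagonal p) * (1 - Fstar N piv))) ∧
      (∀ q, Hmap (Amat Q piv β δ) (1 - Fstar N piv) p q ≤ 1) := by
  haveI : NeZero m := ⟨by omega⟩
  haveI : NeZero n := ⟨by omega⟩
  haveI : Nonempty (Fin m × Fin n) := ⟨(⟨0, by omega⟩, ⟨0, by omega⟩)⟩
  classical
  set S : Matrix (Fin m × Fin n) (Fin m × Fin n) ℝ :=
    Matrix.diagonal p + (1 - Matrix.diagonal p) * (1 - Fstar N piv) with hSdef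
  have hSalt : S = 1 - ((1 : Matrix (Fin m × Fin n) (Fin m × Fin n) ℝ)
      - Matrix.diagonal p) * Fstar N piv := by
    rw [hSdef]; noncomm_ring
  have hdiag1p : (1 : Matrix (Fin m × Fin n) (Fin m × Fin n) ℝ) - Matrix.diagonal p
      = Matrix.diagonal (fun q => 1 - p q) := by
    ext q q'
    simp only [Matrix.sub_apply, Matrix.one_apply, Matrix.diagonal_apply]
    split <;> simp
  have hSentry : ∀ q q', S q q' = (if q = q' then (1:ℝ) else 0)
      - (1 - p q) * Fstar N piv q q' := by
    intro q q'
    rw [hSalt, hdiag1p]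
    simp [Matrix.sub_apply, Matrix.one_apply, Matrix.diagonal_mul]
  have hSrow : ∀ q, ∑ q', S q q' = p q := by
    intro q
    rw [Finset.sum_congr rfl fun q' _ => hSentry q q', Finset.sum_sub_distrib,
      Finset.sum_ite_eq, ← Finset.mul_sum, fstar_rowsum N piv hN hpivpos q]
    simp
  have hBS : ∀ q q', (pairDiag β * S) q q' = β q.1 q.2 * S q q' := by
    intro q q'
    simp [pairDiag, Matrix.diagonal_mul]
  set K₁ := Lstar Q piv + pairDiag δ with hK1def
  set K₂ := K₁ + pairDiag β * S with hK2def
  have hLoff : ∀ q q' : Fin m × Fin n, q ≠ q' → Lstar Q piv q q' ≤ 0 := by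
    intro q q' hne
    simp only [Lstar, Matrix.of_apply]
    split
    · have h2 : q.2 ≠ q'.2 := by
        intro h
        exact hne (Prod.ext (by assumption) h)
      rw [if_neg h2]
      exact neg_nonpos.2 (div_nonneg (mul_nonneg (hQoff q.1 q'.2 q.2 (Ne.symm h2))
        (hpivpos q.1 q'.2).le) (hpivpos q.1 q.2).le)
    · exact le_refl 0
  have hK1off : ∀ q q', q ≠ q' → K₁ q q' ≤ 0 := by
    intro q q' h
    have hd0 : pairDiag δ q q' = 0 := by
      simp [pairDiag, Matrix.diagonal_apply_ne _ h]
    rw [hK1def]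
    simp only [Matrix.add_apply, hd0, add_zero]
    exact hLoff q q' h
  have hFnn := fstar_nonneg N piv hN hpivpos
  have hK2off : ∀ q q', q ≠ q' → K₂ q q' ≤ 0 := by
    intro q q' h
    have h3 : S q q' = -((1 - p q) * Fstar N piv q q') := by
      rw [hSentry, if_neg h]; ring
    have hbs : (pairDiag β * S) q q' ≤ 0 := by
      rw [hBS, h3]
      have h4 := hFnn q q'
      have hb := (hβ q.1 q.2).le
      have hpq := hp1 q
      have h5 : 0 ≤ β q.1 q.2 * ((1 - p q) * Fstar N piv q q') :=
        mul_nonneg hb (mul_nonneg (by linarith) h4)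
      linarith
    rw [hK2def]
    simp only [Matrix.add_apply]
    linarith [hK1off q q' h]
  have hLrow := lstar_rowsum Q piv hpivpos hQdiag hpiveig
  have hK1row : ∀ q, ∑ q', K₁ q q' = δ q.1 q.2 := by
    intro q
    rw [hK1def]
    simp only [Matrix.add_apply, Finset.sum_add_distrib, hLrow q, zero_add]
    simp [pairDiag, Matrix.diagonal_apply, Finset.sum_ite_eq]
  have hK2row : ∀ q, ∑ q', K₂ q q' = δ q.1 q.2 + β q.1 q.2 * p q := by
    intro q
    rw [hK2def]
    simp only [Matrix.add_apply, Finset.sum_add_distrib, hK1row q]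
    congr 1
    rw [Finset.sum_congr rfl fun q' _ => hBS q q', ← Finset.mul_sum, hSrow q]
  have hK1rownn : ∀ q, 0 ≤ ∑ q', K₁ q q' := fun q => (hK1row q) ▸ hδ q.1 q.2
  have hK2rownn : ∀ q, 0 ≤ ∑ q', K₂ q q' := fun q => (hK2row q) ▸
    add_nonneg (hδ _ _) (mul_nonneg (hβ _ _).le (hp0 q))
  have hQdiagle : ∀ (α : Fin m) (a : Fin n), Q α a a ≤ 0 := by
    intro α a
    rw [hQdiag]
    refine neg_nonpos.2 (Finset.sum_nonneg fun l hl => ?_)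
    refine hQoff α a l fun h => ?_
    exact (Finset.mem_sdiff.1 hl).2 (Finset.mem_singleton.2 h.symm)
  have hLedge : ∀ (α : Fin m) (a c : Fin n), 0 < Q α c a →
      a ≠ c ∧ Lstar Q piv (α, a) (α, c) < 0 := by
    intro α a c h
    have hac : a ≠ c := by
      rintro rfl
      exact absurd h (not_lt.2 (hQdiagle α a))
    refine ⟨hac, ?_⟩
    simp only [Lstar, Matrix.of_apply, if_pos rfl, if_neg hac]
    exact neg_neg_iff_pos.2 (div_pos (mul_pos h (hpivpos α c)) (hpivpos α a))
  have hpath : ∀ (α : Fin m) (i k : Fin n),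
      Relation.ReflTransGen (fun x y : Fin m × Fin n =>
        x ≠ y ∧ Lstar Q piv x y ≠ 0 ∧ x.2 ≠ y.2) (α, i) (α, k) := by
    intro α i k
    have h1 := (hQirr α k i).swap
    refine Relation.ReflTransGen.lift (fun j => (α, j)) ?_ _ _ h1
    intro a c h
    obtain ⟨hac, hlt⟩ := hLedge α a c h
    exact ⟨fun hh => hac (congrArg Prod.snd hh), hlt.ne, hac⟩
  have hK1chain : ∀ q : Fin m × Fin n, ∃ k,
      Relation.ReflTransGen (fun a c => a ≠ c ∧ K₁ a c ≠ 0) q k ∧ 0 < ∑ j, K₁ k j := by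
    rintro ⟨α, i⟩
    obtain ⟨k, hk⟩ := hδpos α
    refine ⟨(α, k), ?_, by rw [hK1row]; exact hk⟩
    refine Relation.ReflTransGen.mono ?_ _ _ (hpath α i k)
    rintro x y ⟨hne, hL, -⟩
    refine ⟨hne, ?_⟩
    have hd0 : pairDiag δ x y = 0 := by
      simp [pairDiag, Matrix.diagonal_apply_ne _ hne]
    rw [hK1def]
    simp only [Matrix.add_apply, hd0, add_zero]
    exact hL
  have hK2chain : ∀ q : Fin m × Fin n, ∃ k,
      Relation.ReflTransGen (fun a c => a ≠ c ∧ K₂ a c ≠ 0) q k ∧ 0 < ∑ j, K₂ k j := by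
    rintro ⟨α, i⟩
    obtain ⟨k, hk⟩ := hδpos α
    refine ⟨(α, k), ?_, by
      rw [hK2row]
      have := mul_nonneg (hβ α k).le (hp0 (α, k))
      have hk' : (0:ℝ) < δ (α, k).1 (α, k).2 := hk
      linarith⟩
    refine Relation.ReflTransGen.mono ?_ _ _ (hpath α i k)
    rintro x y ⟨hne, hL, hsnd⟩
    refine ⟨hne, ?_⟩
    have hd0 : pairDiag δ x y = 0 := by
      simp [pairDiag, Matrix.diagonal_apply_ne _ hne]
    have hF0 : Fstar N piv x y = 0 := by
      simp [Fstar, if_neg hsnd]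
    have hS0 : S x y = 0 := by
      rw [hSentry, if_neg hne, hF0]; ring
    have hbs0 : (pairDiag β * S) x y = 0 := by rw [hBS, hS0, mul_zero]
    rw [hK2def, hK1def]
    simp only [Matrix.add_apply, hd0, hbs0, add_zero]
    exact hL
  have hK1unit : IsUnit K₁ := wcdd_isUnit K₁ hK1off hK1rownn hK1chain
  have hK2unit : IsUnit K₂ := wcdd_isUnit K₂ hK2off hK2rownn hK2chain
  have hdet1 : IsUnit K₁.det := (Matrix.isUnit_iff_isUnit_det K₁).1 hK1unit
  have hdet2 : IsUnit K₂.det := (Matrix.isUnit_iff_isUnit_det K₂).1 hK2unit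
  have hA : K₁ * Amat Q piv β δ = pairDiag β := by
    simp only [Amat]
    rw [← hK1def, ← Matrix.mul_assoc, Matrix.mul_nonsing_inv _ hdet1, Matrix.one_mul]
  have hW : K₁ * (1 + Amat Q piv β δ * S) = K₂ := by
    rw [Matrix.mul_add, Matrix.mul_one, ← Matrix.mul_assoc, hA, hK2def]
  set W := 1 + Amat Q piv β δ * S with hWdef
  have hWunit : IsUnit W := by
    rw [Matrix.isUnit_iff_isUnit_det]
    have hdd : K₁.det * W.det = K₂.det := by rw [← Matrix.det_mul, hW]
    exact isUnit_of_mul_isUnit_right (hdd ▸ hdet2)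
  refine ⟨hWunit, ?_⟩
  have hdetW : IsUnit W.det := (Matrix.isUnit_iff_isUnit_det W).1 hWunit
  set z := K₂⁻¹.mulVec (fun q : Fin m × Fin n => δ q.1 q.2) with hzdef
  have hKz : K₂.mulVec z = fun q => δ q.1 q.2 := by
    rw [hzdef, Matrix.mulVec_mulVec, Matrix.mul_nonsing_inv _ hdet2, Matrix.one_mulVec]
  have hznn : ∀ q, 0 ≤ z q :=
    wcdd_nonneg K₂ _ z hK2off hK2rownn (fun q => hδ q.1 q.2) hK2chain hKz
  have hWinv : W = K₁⁻¹ * K₂ := by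
    rw [← hW, ← Matrix.mul_assoc, Matrix.nonsing_inv_mul _ hdet1, Matrix.one_mul]
  have hones : K₁.mulVec (fun _ => 1) = fun q => δ q.1 q.2 := by
    funext q
    simp only [Matrix.mulVec, dotProduct, mul_one]
    exact hK1row q
  have hWz : W.mulVec z = fun _ => 1 := by
    rw [hWinv, ← Matrix.mulVec_mulVec, hKz, ← hones, Matrix.mulVec_mulVec,
      Matrix.nonsing_inv_mul _ hdet1, Matrix.one_mulVec]
  have hS1 : S.mulVec (fun _ => 1) = p := by
    funext q
    simp only [Matrix.mulVec, dotProduct, mul_one]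
    exact hSrow q
  have hW1 : W.mulVec (fun _ => 1) = fun q => 1 + (Amat Q piv β δ).mulVec p q := by
    rw [hWdef, Matrix.add_mulVec, Matrix.one_mulVec, ← Matrix.mulVec_mulVec, hS1]
    funext q
    simp
  have hApz : (Amat Q piv β δ).mulVec p = W.mulVec ((fun _ => 1) - z) := by
    rw [Matrix.mulVec_sub, hWz, hW1]
    funext q'
    simp
  have hmain : Hmap (Amat Q piv β δ) (1 - Fstar N piv) p = (fun _ => 1) - z := by
    simp only [Hmap]
    rw [← hSdef, ← hWdef, hApz, Matrix.mulVec_mulVec,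
      Matrix.nonsing_inv_mul _ hdetW, Matrix.one_mulVec]
  intro q
  rw [hmain]
  simp only [Pi.sub_apply]
  linarith [hznn q]
end

section
/- Suppose R₀ := ρ(A F*) > 1, and let u ∈ ℝ^{nm} be an entrywise-positive eigenvector with A F* u = R₀ u. Then there exists ε₀ > 0 such that for every ε ∈ (0, ε₀), the vector ε u lies in [0,1]^{nm} and H(ε u) ≥ ε u entrywise. -/
open Matrix BigOperators Finset

/-- Spectral radius of a real square matrix: the maximum of the absolute values of its
(complex) eigenvalues. -/
noncomputable def specRadius {k : Type*} [Fintype k] [DecidableEq k]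
    (M : Matrix k k ℝ) : ℝ :=
  sSup {r : ℝ | ∃ z ∈ spectrum ℂ (M.map Complex.ofReal), ‖z‖ = r}

lemma zmat_mulVec_nonneg {k : Type*} [Fintype k] [Nonempty k]
    (G : Matrix k k ℝ) (hoff : ∀ i j, i ≠ j → G i j ≤ 0)
    (hdom : ∀ i, 0 < ∑ j, G i j) (x : k → ℝ)
    (hy : ∀ i, 0 ≤ G.mulVec x i) : ∀ i, 0 ≤ x i := by
  obtain ⟨i₀, -, hmin⟩ := Finset.exists_min_image Finset.univ x
    ⟨Classical.arbitrary k, Finset.mem_univ _⟩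
  have h1 : G.mulVec x i₀ ≤ (∑ j, G i₀ j) * x i₀ := by
    rw [Matrix.mulVec, dotProduct, Finset.sum_mul]
    refine Finset.sum_le_sum fun j _ => ?_
    rcases eq_or_ne i₀ j with rfl | h
    · exact le_refl _
    · nlinarith [hoff i₀ j h, hmin j (Finset.mem_univ j)]
  have h2 : 0 ≤ x i₀ := by nlinarith [hy i₀, hdom i₀]
  exact fun i => le_trans h2 (hmin i (Finset.mem_univ i))

lemma zmat_isUnit_det {k : Type*} [Fintype k] [Nonempty k] [DecidableEq k]
    (G : Matrix k k ℝ) (hoff : ∀ i j, i ≠ j → G i j ≤ 0)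
    (hdom : ∀ i, 0 < ∑ j, G i j) : IsUnit G.det := by
  rw [isUnit_iff_ne_zero]
  intro hdet
  obtain ⟨v, hv, hGv⟩ := (Matrix.exists_mulVec_eq_zero_iff).mpr hdet
  have h1 : ∀ i, 0 ≤ v i :=
    zmat_mulVec_nonneg G hoff hdom v (fun i => by rw [hGv]; exact le_refl _)
  have h2 : ∀ i, 0 ≤ -v i := by
    refine zmat_mulVec_nonneg G hoff hdom (-v) (fun i => ?_)
    rw [Matrix.mulVec_neg, hGv]
    simp
  exact hv (funext fun i => by
    have a := h1 i; have b := h2 i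
    simp only [Pi.neg_apply, Pi.zero_apply] at *; linarith)

set_option maxHeartbeats 1000000 in
/-- Suppose `R₀ = ρ(A F*) > 1` and `u` is an entrywise-positive
eigenvector with `A F* u = R₀ u`. Then there exists `ε₀ > 0` such that for every
`ε ∈ (0, ε₀)`, the vector `ε u` lies in `[0,1]^{nm}` and `H(ε u) ≥ ε u` entrywise. -/
theorem Hmap_ge_on_small_multiples_of_perron_vector
    {n m : ℕ} (hn : 2 ≤ n) (hm : 1 ≤ m)
    (Q : Fin m → Matrix (Fin n) (Fin n) ℝ)
    (hQoff : ∀ (α : Fin m) (i j : Fin n), i ≠ j → 0 ≤ Q α i j)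
    (hQdiag : ∀ (α : Fin m) (i : Fin n), Q α i i = -∑ j ∈ Finset.univ \ {i}, Q α i j)
    (hQirr : ∀ (α : Fin m) (i j : Fin n),
      Relation.ReflTransGen (fun a b => 0 < Q α a b) i j)
    (piv : Fin m → Fin n → ℝ) (hpivpos : ∀ α i, 0 < piv α i)
    (hpiveig : ∀ (α : Fin m) (i : Fin n), ∑ j, Q α j i * piv α j = 0)
    (hpivsum : ∀ α, ∑ i, piv α i = 1)
    (N : Fin m → ℝ) (hN : ∀ α, 0 < N α)
    (β δ : Fin m → Fin n → ℝ)
    (hβ : ∀ α i, 0 < β α i) (hδ : ∀ α i, 0 ≤ δ α i)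
    (hδpos : ∀ α, ∃ k, 0 < δ α k)
    (R₀ : ℝ) (hR₀ : R₀ = specRadius (Amat Q piv β δ * Fstar N piv)) (hR₀gt : 1 < R₀)
    (u : Fin m × Fin n → ℝ) (hu : ∀ q, 0 < u q)
    (heig : (Amat Q piv β δ * Fstar N piv).mulVec u = R₀ • u) :
    ∃ ε₀ > (0 : ℝ), ∀ ε : ℝ, 0 < ε → ε < ε₀ →
      (∀ q, ε * u q ∈ Set.Icc (0 : ℝ) 1) ∧
      (∀ q, ε * u q ≤ Hmap (Amat Q piv β δ) (1 - Fstar N piv) (ε • u) q) := by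
  classical
  haveI hne1 : Nonempty (Fin m) := ⟨⟨0, by omega⟩⟩
  haveI hne2 : Nonempty (Fin n) := ⟨⟨0, by omega⟩⟩
  haveI hk : Nonempty (Fin m × Fin n) := ⟨⟨⟨0, by omega⟩, ⟨0, by omega⟩⟩⟩
  -- row sums of Lstar are zero
  have hLrow : ∀ q : Fin m × Fin n, ∑ q', Lstar Q piv q q' = 0 := by
    rintro ⟨α, i⟩
    have hpne : piv α i ≠ 0 := ne_of_gt (hpivpos α i)
    have hkey : ∑ j ∈ Finset.univ \ {i}, Q α j i * piv α j
        = (∑ j ∈ Finset.univ \ {i}, Q α i j) * piv α i := by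
      have h0 := hpiveig α i
      rw [Finset.sum_eq_sum_sdiff_singleton_add (Finset.mem_univ i)] at h0
      rw [hQdiag α i] at h0
      linarith
    rw [Fintype.sum_prod_type]
    rw [Finset.sum_eq_single α (fun σ _ hσ => by
          refine Finset.sum_eq_zero fun j _ => ?_
          simp [Lstar, Matrix.of_apply, Ne.symm hσ]) (fun h => absurd (Finset.mem_univ α) h)]
    have hentry : ∀ j : Fin n, Lstar Q piv (α, i) (α, j)
        = if i = j then ∑ j ∈ Finset.univ \ {i}, Q α i j
          else -(Q α j i * piv α j / piv α i) := fun j => by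
      simp [Lstar, Matrix.of_apply]
    simp only [hentry]
    rw [Finset.sum_eq_sum_sdiff_singleton_add (Finset.mem_univ i), if_pos rfl]
    have h2 : ∑ j ∈ Finset.univ \ {i}, (if i = j then ∑ j ∈ Finset.univ \ {i}, Q α i j
          else -(Q α j i * piv α j / piv α i))
        = ∑ j ∈ Finset.univ \ {i}, -(Q α j i * piv α j / piv α i) :=
      Finset.sum_congr rfl (fun j hj => by
        rw [Finset.mem_sdiff, Finset.mem_singleton] at hj
        rw [if_neg (fun h => hj.2 h.symm)])
    have h3 : ∑ j ∈ Finset.univ \ {i}, -(Q α j i * piv α j / piv α i)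
        = -∑ j ∈ Finset.univ \ {i}, Q α i j := by
      have e1 : ∑ j ∈ Finset.univ \ {i}, -(Q α j i * piv α j / piv α i)
          = -((∑ j ∈ Finset.univ \ {i}, Q α j i * piv α j) / piv α i) := by
        rw [Finset.sum_neg_distrib, ← Finset.sum_div]
      rw [e1, hkey, mul_div_assoc, div_self hpne, mul_one]
    rw [h2, h3]; ring
  -- Fstar facts
  have hT : ∀ i : Fin n, 0 < ∑ τ, N τ * piv τ i := fun i =>
    Finset.sum_pos (fun τ _ => mul_pos (hN τ) (hpivpos τ i)) Finset.univ_nonempty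
  have hFnn : ∀ q q' : Fin m × Fin n, 0 ≤ Fstar N piv q q' := by
    intro q q'
    simp only [Fstar, Matrix.of_apply]
    split
    · exact div_nonneg (mul_nonneg (le_of_lt (hN _)) (le_of_lt (hpivpos _ _)))
        (le_of_lt (hT _))
    · exact le_refl 0
  have hFrow : ∀ q : Fin m × Fin n, ∑ q', Fstar N piv q q' = 1 := by
    rintro ⟨α, i⟩
    rw [Fintype.sum_prod_type]
    have hin : ∀ σ : Fin m, ∑ j, Fstar N piv (α, i) (σ, j)
        = N σ * piv σ i / ∑ τ, N τ * piv τ i := by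
      intro σ
      simp only [Fstar, Matrix.of_apply]
      rw [Finset.sum_ite_eq]
      simp
    simp only [hin]
    rw [← Finset.sum_div, div_self (ne_of_gt (hT i))]
  -- W facts
  have hWoff : ∀ q q' : Fin m × Fin n, q ≠ q' →
      (Lstar Q piv + pairDiag δ) q q' ≤ 0 := by
    intro q q' hqq
    rw [Matrix.add_apply]
    have hd : pairDiag δ q q' = 0 := Matrix.diagonal_apply_ne _ hqq
    rw [hd, add_zero]
    simp only [Lstar, Matrix.of_apply]
    by_cases h1 : q.1 = q'.1
    · have h2 : q.2 ≠ q'.2 := fun h => hqq (Prod.ext h1 h)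
      rw [if_pos h1, if_neg h2]
      have := hQoff q.1 q'.2 q.2 (Ne.symm h2)
      have p1 := hpivpos q.1 q'.2
      have p2 := hpivpos q.1 q.2
      have : 0 ≤ Q q.1 q'.2 q.2 * piv q.1 q'.2 / piv q.1 q.2 := by positivity
      linarith
    · rw [if_neg h1]
  have hWrow : ∀ q : Fin m × Fin n, ∑ q', (Lstar Q piv + pairDiag δ) q q' = δ q.1 q.2 := by
    intro q
    simp only [Matrix.add_apply]
    rw [Finset.sum_add_distrib, hLrow, zero_add]
    simp only [pairDiag, Matrix.diagonal_apply]
    rw [Finset.sum_ite_eq]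
    simp
  -- abbreviations
  set W : Matrix (Fin m × Fin n) (Fin m × Fin n) ℝ := Lstar Q piv + pairDiag δ with hWdef
  set B : Matrix (Fin m × Fin n) (Fin m × Fin n) ℝ := pairDiag β with hBdef
  set F : Matrix (Fin m × Fin n) (Fin m × Fin n) ℝ := Fstar N piv with hFdef
  by_cases hW : IsUnit W.det
  · -- main case
    have hAmat : Amat Q piv β δ = W⁻¹ * B := by rw [Amat, ← hWdef, ← hBdef]
    -- eigen identity: B F u = R₀ • W u
    have hBF : (B * F).mulVec u = R₀ • W.mulVec u := by
      have h1 : W.mulVec ((Amat Q piv β δ * F).mulVec u) = (B * F).mulVec u := by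
        rw [Matrix.mulVec_mulVec]
        congr 1
        rw [hAmat, Matrix.mul_assoc (W⁻¹) B F, Matrix.mul_nonsing_inv_cancel_left _ _ hW]
      rw [heig, Matrix.mulVec_smul] at h1
      exact h1.symm
    have hWu : ∀ q, R₀ * W.mulVec u q = β q.1 q.2 * (F.mulVec u) q := by
      intro q
      have h2 := congrFun hBF q
      rw [← Matrix.mulVec_mulVec] at h2
      have h3 : B.mulVec (F.mulVec u) q = β q.1 q.2 * (F.mulVec u) q := by
        rw [hBdef]; simp [pairDiag, Matrix.mulVec_diagonal]
      rw [h3] at h2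
      simpa using h2.symm
    have hFu : ∀ q, 0 ≤ (F.mulVec u) q := fun q =>
      Finset.sum_nonneg fun q' _ => mul_nonneg (hFnn q q') (le_of_lt (hu q'))
    have hR0ne : R₀ ≠ 0 := by linarith
    have hc : (0:ℝ) < 1 - 1/R₀ := by
      have : 1/R₀ < 1 := by rw [div_lt_one (by linarith)]; linarith
      linarith
    -- choice of ε₀
    refine ⟨Finset.univ.inf' Finset.univ_nonempty (fun q => (1 - 1/R₀) / u q), ?_, ?_⟩
    · exact (Finset.lt_inf'_iff Finset.univ_nonempty).mpr (fun q _ => div_pos hc (hu q))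
    intro ε hε hεlt
    have hεu : ∀ q, ε * u q < 1 - 1/R₀ := by
      intro q
      have h4 := lt_of_lt_of_le hεlt (Finset.inf'_le _ (Finset.mem_univ q))
      exact (lt_div_iff₀ (hu q)).mp h4
    have hεu1 : ∀ q, ε * u q ≤ 1 := fun q => le_of_lt (lt_trans (hεu q)
      (by have : 0 < 1/R₀ := by positivity
          linarith))
    constructor
    · exact fun q => ⟨mul_nonneg (le_of_lt hε) (le_of_lt (hu q)), hεu1 q⟩
    -- the matrices S and G
    set dp : Matrix (Fin m × Fin n) (Fin m × Fin n) ℝ := Matrix.diagonal (ε • u) with hdp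
    set S : Matrix (Fin m × Fin n) (Fin m × Fin n) ℝ := dp + (1 - dp) * (1 - F) with hSdef
    have hS : S = 1 - (1 - dp) * F := by
      rw [hSdef, mul_sub, mul_one, sub_mul, one_mul]
      abel
    have h1dp : (1 : Matrix (Fin m × Fin n) (Fin m × Fin n) ℝ) - dp
        = Matrix.diagonal (fun q => 1 - ε * u q) := by
      rw [hdp, ← Matrix.diagonal_one, ← Matrix.diagonal_sub]
      rfl
    set G : Matrix (Fin m × Fin n) (Fin m × Fin n) ℝ := W + B * S with hGdef
    have hBmul : ∀ (M : Matrix (Fin m × Fin n) (Fin m × Fin n) ℝ) q q',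
        (B * M) q q' = β q.1 q.2 * M q q' := by
      intro M q q'
      rw [hBdef]
      simp [pairDiag, Matrix.diagonal_mul]
    have hSoff : ∀ q q' : Fin m × Fin n, q ≠ q' →
        S q q' = -((1 - ε * u q) * F q q') := by
      intro q q' hqq
      rw [hS, Matrix.sub_apply, Matrix.one_apply_ne hqq, h1dp, Matrix.diagonal_mul]
      ring
    have hSrow : ∀ q : Fin m × Fin n, ∑ q', S q q' = ε * u q := by
      intro q
      rw [hS]
      simp only [Matrix.sub_apply]
      rw [Finset.sum_sub_distrib]
      have e1 : ∑ q' : Fin m × Fin n, (1 : Matrix (Fin m × Fin n) (Fin m × Fin n) ℝ) q q' = 1 := by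
        simp only [Matrix.one_apply]
        rw [Finset.sum_ite_eq]
        simp
      have e2 : ∑ q' : Fin m × Fin n, ((1 - dp) * F) q q' = 1 - ε * u q := by
        have h10 : ∀ q' : Fin m × Fin n, ((1 - dp) * F) q q' = (1 - ε * u q) * F q q' :=
          fun q' => by rw [h1dp, Matrix.diagonal_mul]
        simp only [h10]
        rw [← Finset.mul_sum, hFrow q, mul_one]
      rw [e1, e2]
      ring
    have hGoff : ∀ q q' : Fin m × Fin n, q ≠ q' → G q q' ≤ 0 := by
      intro q q' hqq
      rw [hGdef, Matrix.add_apply, hBmul, hSoff q q' hqq]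
      have h5 : 0 ≤ (1 - ε * u q) * F q q' :=
        mul_nonneg (by linarith [hεu1 q]) (hFnn q q')
      have h6 := hWoff q q' hqq
      have h7 := le_of_lt (hβ q.1 q.2)
      nlinarith
    have hGrow : ∀ q : Fin m × Fin n, 0 < ∑ q', G q q' := by
      intro q
      have : ∑ q', G q q' = δ q.1 q.2 + β q.1 q.2 * (ε * u q) := by
        rw [hGdef]
        simp only [Matrix.add_apply]
        rw [Finset.sum_add_distrib, hWrow]
        congr 1
        have : ∑ q', (B * S) q q' = β q.1 q.2 * ∑ q', S q q' := by
          rw [Finset.mul_sum]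
          exact Finset.sum_congr rfl fun q' _ => hBmul S q q'
        rw [this, hSrow]
      rw [this]
      have := hδ q.1 q.2
      have := mul_pos (hβ q.1 q.2) (mul_pos hε (hu q))
      linarith
    have hGdet : IsUnit G.det := zmat_isUnit_det G hGoff hGrow
    -- Hmap in terms of G
    have hKeq : 1 + (W⁻¹ * B) * S = W⁻¹ * G := by
      rw [hGdef, Matrix.mul_add W⁻¹ W (B * S), Matrix.nonsing_inv_mul _ hW,
        ← Matrix.mul_assoc]
    have hKinv : (1 + (W⁻¹ * B) * S)⁻¹ = G⁻¹ * W := by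
      rw [hKeq, Matrix.mul_inv_rev, Matrix.nonsing_inv_nonsing_inv _ hW]
    have hH : Hmap (Amat Q piv β δ) (1 - F) (ε • u) = (G⁻¹ * B).mulVec (ε • u) := by
      have hmm : G⁻¹ * W * (W⁻¹ * B) = G⁻¹ * B := by
        rw [Matrix.mul_assoc G⁻¹ W (W⁻¹ * B), Matrix.mul_nonsing_inv_cancel_left _ _ hW]
      rw [Hmap, hAmat, ← hdp, ← hSdef, hKinv, Matrix.mulVec_mulVec, hmm]
    -- the correction vector
    set y : Fin m × Fin n → ℝ := B.mulVec (ε • u) - G.mulVec (ε • u) with hydef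
    have hynn : ∀ q, 0 ≤ y q := by
      intro q
      have hBv : B.mulVec (ε • u) q = β q.1 q.2 * (ε * u q) := by
        rw [hBdef]; simp [pairDiag, Matrix.mulVec_diagonal, smul_eq_mul]
      have hBv2 : ∀ v : (Fin m × Fin n) → ℝ, B.mulVec v q = β q.1 q.2 * v q := by
        intro v; rw [hBdef]; simp [pairDiag, Matrix.mulVec_diagonal]
      have hSv : S.mulVec (ε • u) q
          = ε * u q - (1 - ε * u q) * (ε * (F.mulVec u) q) := by
        rw [hS, Matrix.sub_mulVec, Matrix.one_mulVec]
        have h10 : ((1 - dp) * F).mulVec (ε • u) q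
            = (1 - ε * u q) * (ε * (F.mulVec u) q) := by
          rw [← Matrix.mulVec_mulVec, h1dp]
          rw [show F.mulVec (ε • u) = ε • F.mulVec u from Matrix.mulVec_smul F ε u]
          simp [Matrix.mulVec_diagonal, smul_eq_mul]
        rw [Pi.sub_apply, h10]
        simp [smul_eq_mul]
      have hGv : G.mulVec (ε • u) q = ε * W.mulVec u q
          + β q.1 q.2 * (ε * u q - (1 - ε * u q) * (ε * (F.mulVec u) q)) := by
        rw [hGdef, Matrix.add_mulVec, Pi.add_apply]
        rw [show W.mulVec (ε • u) = ε • W.mulVec u from Matrix.mulVec_smul W ε u]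
        rw [← Matrix.mulVec_mulVec, hBv2, hSv]
        simp [smul_eq_mul]
      have ha : W.mulVec u q = β q.1 q.2 * (F.mulVec u) q * (1/R₀) := by
        have h := hWu q
        field_simp
        linarith
      have heq : y q = ε * (β q.1 q.2 * (F.mulVec u) q) * (1 - 1/R₀ - ε * u q) := by
        rw [hydef, Pi.sub_apply, hBv, hGv, ha]
        ring
      rw [heq]
      have h8 : 0 ≤ 1 - 1/R₀ - ε * u q := by linarith [hεu q]
      have h9 : 0 ≤ ε * (β q.1 q.2 * (F.mulVec u) q) :=
        mul_nonneg (le_of_lt hε) (mul_nonneg (le_of_lt (hβ q.1 q.2)) (hFu q))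
      exact mul_nonneg h9 h8
    set x : Fin m × Fin n → ℝ := G⁻¹.mulVec y with hxdef
    have hGx : G.mulVec x = y := by
      rw [hxdef, Matrix.mulVec_mulVec, Matrix.mul_nonsing_inv _ hGdet, Matrix.one_mulVec]
    have hx : ∀ q, 0 ≤ x q :=
      zmat_mulVec_nonneg G hGoff hGrow x (fun q => by rw [hGx]; exact hynn q)
    have hfin : (G⁻¹ * B).mulVec (ε • u) = (ε • u) + x := by
      rw [← Matrix.mulVec_mulVec]
      have hBy : B.mulVec (ε • u) = G.mulVec (ε • u) + y := by
        rw [hydef]; abel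
      rw [hBy, Matrix.mulVec_add, Matrix.mulVec_mulVec, Matrix.nonsing_inv_mul _ hGdet,
        Matrix.one_mulVec, hxdef]
    intro q
    rw [hH, hfin]
    have := hx q
    simp only [Pi.add_apply, Pi.smul_apply, smul_eq_mul]
    linarith
  · -- degenerate case: W singular forces Amat = 0, contradicting the eigen-equation
    exfalso
    have hA0 : Amat Q piv β δ = 0 := by
      rw [Amat, ← hWdef, ← hBdef, Matrix.nonsing_inv_apply_not_isUnit _ hW, Matrix.zero_mul]
    have q₀ : Fin m × Fin n := Classical.arbitrary _
    have h1 := congrFun heig q₀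
    rw [hA0, Matrix.zero_mul, Matrix.zero_mulVec] at h1
    simp only [Pi.zero_apply, Pi.smul_apply, smul_eq_mul] at h1
    nlinarith [hu q₀, hR₀gt, h1.symm]
end

section
/- If p* and q* are two fixed points of H with 0 < p*_k < 1 and 0 < q*_k < 1 for every index k (i.e. H(p*) = p* and H(q*) = q* with p*, q* strictly between 0 and 1 entrywise), then p* = q*. In other words, the map H has at most one strictly positive fixed point. -/
open Matrix BigOperators Finset

private lemma mulVec_apply'_aux {K : Type*} [Fintype K] (M : Matrix K K ℝ) (v : K → ℝ)
    (k : K) : M.mulVec v k = ∑ l, M k l * v l := rfl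

private lemma key_le_aux {K : Type*} [Fintype K] [DecidableEq K] [Nonempty K]
    (L F : Matrix K K ℝ) (β : K → ℝ)
    (hLoff : ∀ k l, k ≠ l → L k l ≤ 0)
    (hF : ∀ k l, 0 ≤ F k l) (hFdiag : ∀ k, 0 < F k k)
    (hβ : ∀ k, 0 < β k)
    (p q : K → ℝ) (hp0 : ∀ k, 0 < p k)
    (hq0 : ∀ k, 0 < q k) (hq1 : ∀ k, q k < 1)
    (hpe : ∀ k, ∑ l, L k l * p l = β k * ((1 - p k) * F.mulVec p k))
    (hqe : ∀ k, ∑ l, L k l * q l = β k * ((1 - q k) * F.mulVec q k)) :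
    ∀ k, q k ≤ p k := by
  obtain ⟨k0, -, hk0⟩ := Finset.exists_min_image Finset.univ (fun k => p k / q k)
    ⟨Classical.arbitrary K, Finset.mem_univ _⟩
  set s := p k0 / q k0 with hs
  have hs0 : 0 < s := div_pos (hp0 k0) (hq0 k0)
  have hsl : ∀ l, s * q l ≤ p l := by
    intro l
    have h := hk0 l (Finset.mem_univ l)
    calc s * q l ≤ (p l / q l) * q l := by
          exact mul_le_mul_of_nonneg_right h (hq0 l).le
      _ = p l := div_mul_cancel₀ _ (hq0 l).ne'
  by_cases hs1 : 1 ≤ s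
  · intro k
    calc q k ≤ s * q k := le_mul_of_one_le_left (hq0 k).le hs1
      _ ≤ p k := hsl k
  · exfalso
    push_neg at hs1
    have hpk0 : p k0 = s * q k0 := (div_mul_cancel₀ _ (hq0 k0).ne').symm
    have hFq : 0 < F.mulVec q k0 := by
      rw [mulVec_apply'_aux]
      apply Finset.sum_pos'
      · intro l _; exact mul_nonneg (hF k0 l) (hq0 l).le
      · exact ⟨k0, Finset.mem_univ _, mul_pos (hFdiag k0) (hq0 k0)⟩
    have hFpq : s * F.mulVec q k0 ≤ F.mulVec p k0 := by
      rw [mulVec_apply'_aux, mulVec_apply'_aux, Finset.mul_sum]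
      apply Finset.sum_le_sum
      intro l _
      calc s * (F k0 l * q l) = F k0 l * (s * q l) := by ring
        _ ≤ F k0 l * p l := mul_le_mul_of_nonneg_left (hsl l) (hF k0 l)
    have hoff : ∑ l ∈ Finset.univ \ {k0}, L k0 l * p l
        ≤ s * ∑ l ∈ Finset.univ \ {k0}, L k0 l * q l := by
      rw [Finset.mul_sum]
      apply Finset.sum_le_sum
      intro l hl
      have hne : l ≠ k0 := by simpa using (Finset.mem_sdiff.mp hl).2
      have hL := hLoff k0 l (Ne.symm hne)
      calc L k0 l * p l ≤ L k0 l * (s * q l) :=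
            mul_le_mul_of_nonpos_left (hsl l) hL
        _ = s * (L k0 l * q l) := by ring
    have hsplit : ∀ r : K → ℝ,
        ∑ l, L k0 l * r l = ∑ l ∈ Finset.univ \ {k0}, L k0 l * r l + L k0 k0 * r k0 := by
      intro r
      rw [Finset.sum_eq_sum_sdiff_singleton_add (Finset.mem_univ k0)]
    have hq01 : 0 < 1 - q k0 := by linarith [hq1 k0]
    have hp01 : 1 - q k0 < 1 - p k0 := by
      have : p k0 < q k0 := by
        rw [hpk0]
        nlinarith [hq0 k0]
      linarith
    have hnl : s * (β k0 * ((1 - q k0) * F.mulVec q k0))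
        < β k0 * ((1 - p k0) * F.mulVec p k0) := by
      have h1 : (1 - q k0) * (s * F.mulVec q k0) < (1 - p k0) * (s * F.mulVec q k0) :=
        mul_lt_mul_of_pos_right hp01 (mul_pos hs0 hFq)
      have h2 : (1 - p k0) * (s * F.mulVec q k0) ≤ (1 - p k0) * F.mulVec p k0 := by
        apply mul_le_mul_of_nonneg_left hFpq
        linarith
      have h3 : s * ((1 - q k0) * F.mulVec q k0) < (1 - p k0) * F.mulVec p k0 := by
        nlinarith
      calc s * (β k0 * ((1 - q k0) * F.mulVec q k0))
          = β k0 * (s * ((1 - q k0) * F.mulVec q k0)) := by ring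
        _ < β k0 * ((1 - p k0) * F.mulVec p k0) :=
            mul_lt_mul_of_pos_left h3 (hβ k0)
    have hpeq := hpe k0
    have hqeq := hqe k0
    rw [hsplit] at hpeq hqeq
    have hdiag : L k0 k0 * p k0 = s * (L k0 k0 * q k0) := by rw [hpk0]; ring
    nlinarith [hoff, hnl, hpeq, hqeq, hdiag]

/-- If `p*` and `q*` are two fixed points of `H` strictly between `0`
and `1` entrywise, then `p* = q*`: the map `H` has at most one strictly positive fixed
point, where `A = (L* + D)⁻¹ B` and `M = I − F*`. -/
theorem Hmap_fixed_point_unique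
    {n m : ℕ} (hn : 2 ≤ n) (hm : 1 ≤ m)
    (Q : Fin m → Matrix (Fin n) (Fin n) ℝ)
    (hQoff : ∀ (α : Fin m) (i j : Fin n), i ≠ j → 0 ≤ Q α i j)
    (hQdiag : ∀ (α : Fin m) (i : Fin n), Q α i i = -∑ j ∈ Finset.univ \ {i}, Q α i j)
    (hQirr : ∀ (α : Fin m) (i j : Fin n),
      Relation.ReflTransGen (fun a b => 0 < Q α a b) i j)
    (piv : Fin m → Fin n → ℝ) (hpivpos : ∀ α i, 0 < piv α i)
    (hpiveig : ∀ (α : Fin m) (i : Fin n), ∑ j, Q α j i * piv α j = 0)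
    (hpivsum : ∀ α, ∑ i, piv α i = 1)
    (N : Fin m → ℝ) (hN : ∀ α, 0 < N α)
    (β δ : Fin m → Fin n → ℝ)
    (hβ : ∀ α i, 0 < β α i) (hδ : ∀ α i, 0 ≤ δ α i)
    (hδpos : ∀ α, ∃ k, 0 < δ α k)
    (pstar qstar : Fin m × Fin n → ℝ)
    (hpstar0 : ∀ q, 0 < pstar q) (hpstar1 : ∀ q, pstar q < 1)
    (hqstar0 : ∀ q, 0 < qstar q) (hqstar1 : ∀ q, qstar q < 1)
    (hpfix : Hmap (Amat Q piv β δ) (1 - Fstar N piv) pstar = pstar)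
    (hqfix : Hmap (Amat Q piv β δ) (1 - Fstar N piv) qstar = qstar) :
    pstar = qstar := by
  haveI : Nonempty (Fin m) := ⟨⟨0, hm⟩⟩
  haveI : Nonempty (Fin n) := ⟨⟨0, by omega⟩⟩
  set LD := Lstar Q piv + pairDiag δ with hLDdef
  set B := pairDiag β with hBdef
  set F := Fstar N piv with hFdef
  set A := Amat Q piv β δ with hAdef
  set Mlap := (1 - F : Matrix (Fin m × Fin n) (Fin m × Fin n) ℝ) with hMdef
  obtain ⟨k1⟩ : Nonempty (Fin m × Fin n) := inferInstance
  -- Step 1: LD has invertible determinant (else the fixed point would be 0)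
  have hLD : IsUnit LD.det := by
    by_contra h
    have hA0 : A = 0 := by
      rw [hAdef, Amat, Matrix.nonsing_inv_apply_not_isUnit _ h, Matrix.zero_mul]
    have : pstar = 0 := by
      rw [← hpfix, Hmap, hA0, Matrix.zero_mulVec, Matrix.mulVec_zero]
    exact absurd (hpstar0 k1) (by rw [this]; simp)
  -- Step 2: any positive fixed point satisfies the equilibrium equation
  have hEq : ∀ p : Fin m × Fin n → ℝ, (∀ k, 0 < p k) →
      Hmap A Mlap p = p →
      ∀ k, ∑ l, LD k l * p l = β k.1 k.2 * ((1 - p k) * F.mulVec p k) := by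
    intro p hp0 hfix
    set S := (Matrix.diagonal p + (1 - Matrix.diagonal p) * Mlap) with hSdef
    set T := (1 + A * S) with hTdef
    have hfix' : (T⁻¹).mulVec (A.mulVec p) = p := hfix
    have hT : IsUnit T.det := by
      by_contra h
      have : p = 0 := by
        rw [← hfix', Matrix.nonsing_inv_apply_not_isUnit _ h, Matrix.zero_mulVec]
      exact absurd (hp0 k1) (by rw [this]; simp)
    have h1 : A.mulVec p = T.mulVec p := by
      have h := congrArg T.mulVec hfix'
      rwa [Matrix.mulVec_mulVec, Matrix.mul_nonsing_inv _ hT, Matrix.one_mulVec] at h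
    have hLDA : LD * A = B := by
      rw [hAdef, Amat, ← hLDdef, ← hBdef, ← Matrix.mul_assoc,
        Matrix.mul_nonsing_inv _ hLD, Matrix.one_mul]
    have h2 : B.mulVec p = LD.mulVec p + (B * S).mulVec p := by
      have h := congrArg LD.mulVec h1
      rw [Matrix.mulVec_mulVec, hLDA, hTdef, Matrix.mulVec_mulVec, Matrix.mul_add,
        Matrix.mul_one, Matrix.add_mulVec, ← Matrix.mul_assoc, hLDA,
        ← Matrix.mulVec_mulVec] at h
      rw [h, Matrix.mulVec_mulVec]
    have h3 : LD.mulVec p = (B * ((1 - Matrix.diagonal p) * F)).mulVec p := by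
      have hS : (1 : Matrix (Fin m × Fin n) (Fin m × Fin n) ℝ) - S
          = (1 - Matrix.diagonal p) * F := by
        rw [hSdef, hMdef]
        noncomm_ring
      have : (B * ((1 - Matrix.diagonal p) * F)).mulVec p = (B * (1 - S)).mulVec p := by
        rw [hS]
      rw [this, Matrix.mul_sub, Matrix.mul_one, Matrix.sub_mulVec]
      rw [h2]; ring_nf
    intro k
    have h4 := congrFun h3 k
    rw [mulVec_apply'_aux] at h4
    rw [h4]
    have hBd : B * (1 - Matrix.diagonal p) * F
        = Matrix.diagonal (fun k : Fin m × Fin n => β k.1 k.2 * (1 - p k)) * F := by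
      rw [hBdef, pairDiag, ← Matrix.diagonal_one, Matrix.diagonal_sub,
        Matrix.diagonal_mul_diagonal]
    rw [← Matrix.mul_assoc, hBd, ← Matrix.mulVec_mulVec, Matrix.mulVec_diagonal]
    ring
  -- Sign facts
  have hLoff : ∀ k l : Fin m × Fin n, k ≠ l → LD k l ≤ 0 := by
    intro k l hkl
    by_cases h1 : k.1 = l.1
    · have h2 : k.2 ≠ l.2 := fun h2 => hkl (Prod.ext h1 h2)
      have : LD k l = -(Q k.1 l.2 k.2 * piv k.1 l.2 / piv k.1 k.2) := by
        simp [hLDdef, Lstar, pairDiag, Matrix.diagonal_apply_ne _ hkl, h1, h2]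
      rw [this, neg_nonpos]
      exact div_nonneg (mul_nonneg (hQoff _ _ _ (Ne.symm h2)) (hpivpos _ _).le)
        (hpivpos _ _).le
    · have : LD k l = 0 := by
        simp [hLDdef, Lstar, pairDiag, Matrix.diagonal_apply_ne _ hkl, h1]
      rw [this]
  have hden : ∀ i : Fin n, 0 < ∑ τ, N τ * piv τ i := fun i =>
    Finset.sum_pos (fun τ _ => mul_pos (hN τ) (hpivpos τ i)) Finset.univ_nonempty
  have hF : ∀ k l : Fin m × Fin n, 0 ≤ F k l := by
    intro k l
    rw [hFdef, Fstar]
    dsimp only [Matrix.of_apply]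
    by_cases h : k.2 = l.2
    · rw [if_pos h]
      exact div_nonneg (mul_nonneg (hN _).le (hpivpos _ _).le) (hden _).le
    · rw [if_neg h]
  have hFdiag : ∀ k : Fin m × Fin n, 0 < F k k := by
    intro k
    rw [hFdef, Fstar]
    dsimp only [Matrix.of_apply]
    rw [if_pos rfl]
    exact div_pos (mul_pos (hN _) (hpivpos _ _)) (hden _)
  -- Conclude
  have hp := hEq pstar hpstar0 hpfix
  have hq := hEq qstar hqstar0 hqfix
  have hle1 := key_le_aux LD F (fun k => β k.1 k.2) hLoff hF hFdiag
    (fun k => hβ k.1 k.2) pstar qstar hpstar0 hqstar0 hqstar1 hp hq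
  have hle2 := key_le_aux LD F (fun k => β k.1 k.2) hLoff hF hFdiag
    (fun k => hβ k.1 k.2) qstar pstar hqstar0 hpstar0 hpstar1 hq hp
  funext k
  exact le_antisymm (hle2 k) (hle1 k)
end
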